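/- arXiv:2007.07958 — 7 statements merged into one kernel-verified Lean document; each statement's English description precedes it below -/
import Mathlib

section
/- Let ρ₀, ρ₁ be density matrices, t ≥ 0, and let T be any Hermitian matrix with 0 ≤ T ≤ I. Then 1 − tr(ρ₀ T) ≥ tr(ρ₀ · {ρ₀ − t ρ₁ ≤ 0}) + t · (tr(ρ₁ · {ρ₀ − t ρ₁ > 0}) − tr(ρ₁ T)). -/
open ComplexOrder

/-- Orthogonal projection onto the strictly positive eigenspace of a Hermitian matrix. -/
noncomputable def projPos {m : Type*} [Fintype m] [DecidableEq m]
    (A : Matrix m m ℂ) (hA : A.IsHermitian) : Matrix m m ℂ :=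
  ∑ i : m, if 0 < hA.eigenvalues i then
    Matrix.vecMulVec (fun j => hA.eigenvectorBasis i j) (star fun j => hA.eigenvectorBasis i j)
  else 0

/-- Orthogonal projection onto the nonnegative eigenspace of a Hermitian matrix. -/
noncomputable def projNonneg {m : Type*} [Fintype m] [DecidableEq m]
    (A : Matrix m m ℂ) (hA : A.IsHermitian) : Matrix m m ℂ :=
  ∑ i : m, if 0 ≤ hA.eigenvalues i then
    Matrix.vecMulVec (fun j => hA.eigenvectorBasis i j) (star fun j => hA.eigenvectorBasis i j)
  else 0

/-- Orthogonal projection onto the nonpositive eigenspace of a Hermitian matrix. -/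
noncomputable def projNonpos {m : Type*} [Fintype m] [DecidableEq m]
    (A : Matrix m m ℂ) (hA : A.IsHermitian) : Matrix m m ℂ :=
  ∑ i : m, if hA.eigenvalues i ≤ 0 then
    Matrix.vecMulVec (fun j => hA.eigenvectorBasis i j) (star fun j => hA.eigenvectorBasis i j)
  else 0

section NPhelpers

open Matrix
variable {n : ℕ}

private lemma trace_vecMulVec_mul (a b : Fin n → ℂ) (M : Matrix (Fin n) (Fin n) ℂ) :
    (Matrix.vecMulVec a b * M).trace = b ⬝ᵥ (M *ᵥ a) := by
  simp only [Matrix.trace, Matrix.diag, Matrix.mul_apply, Matrix.vecMulVec_apply,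
    dotProduct, Matrix.mulVec]
  rw [Finset.sum_comm]
  simp only [dotProduct, Finset.mul_sum]
  congr 1; ext l; congr 1; ext j; ring

private lemma mul_vecMulVec (M : Matrix (Fin n) (Fin n) ℂ) (a b : Fin n → ℂ) :
    M * Matrix.vecMulVec a b = Matrix.vecMulVec (M *ᵥ a) b := by
  ext j k
  simp only [Matrix.mul_apply, Matrix.vecMulVec_apply, Matrix.mulVec, dotProduct,
    Finset.sum_mul, mul_assoc]

private lemma vecMulVec_mul (M : Matrix (Fin n) (Fin n) ℂ) (a b : Fin n → ℂ) :
    Matrix.vecMulVec a b * M = Matrix.vecMulVec a (b ᵥ* M) := by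
  ext j k
  simp only [Matrix.mul_apply, Matrix.vecMulVec_apply, Matrix.vecMul, dotProduct,
    Finset.mul_sum]
  congr 1; ext l; ring

end NPhelpers

open Matrix

/-- Quantum Neyman–Pearson lower bound (eqn. NPbound-3): for density matrices `ρ₀, ρ₁`,
`t ≥ 0` and any test `0 ≤ T ≤ I`,
`1 − tr(ρ₀ T) ≥ tr(ρ₀ {ρ₀ − tρ₁ ≤ 0}) + t (tr(ρ₁ {ρ₀ − tρ₁ > 0}) − tr(ρ₁ T))`. -/
theorem np_lower_bound {n : ℕ} (ρ₀ ρ₁ T : Matrix (Fin n) (Fin n) ℂ)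
    (hρ₀ : ρ₀.PosSemidef) (hρ₀tr : ρ₀.trace = 1)
    (hρ₁ : ρ₁.PosSemidef) (hρ₁tr : ρ₁.trace = 1)
    (t : ℝ) (ht : 0 ≤ t)
    (hT : T.IsHermitian) (hT0 : T.PosSemidef)
    (hT1 : ((1 : Matrix (Fin n) (Fin n) ℂ) - T).PosSemidef)
    (hH : (ρ₀ - (t : ℂ) • ρ₁).IsHermitian) :
    (ρ₀ * projNonpos (ρ₀ - (t : ℂ) • ρ₁) hH).trace
      + (t : ℂ) * ((ρ₁ * projPos (ρ₀ - (t : ℂ) • ρ₁) hH).trace - (ρ₁ * T).trace)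
    ≤ 1 - (ρ₀ * T).trace := by
  classical
  set Δ : Matrix (Fin n) (Fin n) ℂ := ρ₀ - (t : ℂ) • ρ₁ with hΔdef
  set v : Fin n → (Fin n → ℂ) := fun i => ⇑(hH.eigenvectorBasis i) with hv
  set lam : Fin n → ℝ := hH.eigenvalues with hlam
  set outer : Fin n → Matrix (Fin n) (Fin n) ℂ := fun i => Matrix.vecMulVec (v i) (star (v i))
    with houter
  -- orthonormality
  have horth : ∀ i j, star (v i) ⬝ᵥ v j = if i = j then 1 else 0 := by
    intro i j
    have := orthonormal_iff_ite.mp hH.eigenvectorBasis.orthonormal i j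
    rw [EuclideanSpace.inner_eq_star_dotProduct, dotProduct_comm] at this
    exact this
  -- resolution of identity
  have hres : ∑ i, outer i = (1 : Matrix (Fin n) (Fin n) ℂ) := by
    have h := (Matrix.mem_unitaryGroup_iff).mp (hH.eigenvectorUnitary).2
    ext j k
    rw [← h, Matrix.mul_apply, Matrix.sum_apply]
    refine Finset.sum_congr rfl fun i _ => ?_
    simp only [houter, Matrix.vecMulVec_apply, Pi.star_apply, Matrix.star_apply,
      Matrix.IsHermitian.eigenvectorUnitary_apply, hv]
  -- eigen relations
  have hmulvec : ∀ i, Δ *ᵥ v i = (lam i : ℂ) • v i := by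
    intro i
    have := hH.mulVec_eigenvectorBasis i
    simpa [hv, hlam, Complex.real_smul] using this
  have hDouter : ∀ i, Δ * outer i = (lam i : ℂ) • outer i := by
    intro i
    rw [houter]
    simp only
    rw [_root_.mul_vecMulVec, hmulvec i]
    ext j k
    simp only [Matrix.vecMulVec_apply, Pi.smul_apply, Matrix.smul_apply, smul_eq_mul]
    ring
  have houterD : ∀ i, outer i * Δ = (lam i : ℂ) • outer i := by
    intro i
    rw [houter]
    simp only
    rw [_root_.vecMulVec_mul]
    have hst : star (v i) ᵥ* Δ = (lam i : ℂ) • star (v i) := by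
      have h1 := Matrix.star_mulVec Δ (v i)
      rw [hH] at h1
      rw [← h1, hmulvec i, star_smul]
      simp
    rw [hst]
    ext j k
    simp only [Matrix.vecMulVec_apply, Pi.smul_apply, Matrix.smul_apply, smul_eq_mul]
    ring
  have hΔspec : Δ = ∑ i, (lam i : ℂ) • outer i := by
    calc Δ = (∑ i, outer i) * Δ := by rw [hres, one_mul]
    _ = ∑ i, outer i * Δ := Finset.sum_mul _ _ _
    _ = ∑ i, (lam i : ℂ) • outer i := Finset.sum_congr rfl fun i _ => houterD i
  have htr : ∀ (i : Fin n) (M : Matrix (Fin n) (Fin n) ℂ),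
      (M * outer i).trace = star (v i) ⬝ᵥ (M *ᵥ v i) := by
    intro i M
    rw [Matrix.trace_mul_comm, houter]
    simp only
    exact trace_vecMulVec_mul _ _ _
  have htrouter : ∀ i, (outer i).trace = 1 := by
    intro i
    have := htr i 1
    rwa [one_mul, Matrix.one_mulVec, horth i i, if_pos rfl] at this
  -- s values
  set s : Fin n → ℂ := fun i => star (v i) ⬝ᵥ (T *ᵥ v i) with hs
  have hs0 : ∀ i, 0 ≤ s i := fun i => hT0.dotProduct_mulVec_nonneg (v i)
  have hs1 : ∀ i, s i ≤ 1 := by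
    intro i
    have h := hT1.dotProduct_mulVec_nonneg (v i)
    rw [Matrix.sub_mulVec, Matrix.one_mulVec, dotProduct_sub, horth i i, if_pos rfl] at h
    have := sub_nonneg.mp h
    exact this
  set r : Fin n → ℝ := fun i => (s i).re with hr
  have hsr : ∀ i, s i = (r i : ℂ) := by
    intro i
    have h := (Complex.nonneg_iff).mp (hs0 i)
    exact Complex.ext rfl h.2.symm
  have hr0 : ∀ i, 0 ≤ r i := fun i => ((Complex.nonneg_iff).mp (hs0 i)).1
  have hr1 : ∀ i, r i ≤ 1 := by
    intro i
    have := (Complex.le_def).mp (hs1 i)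
    simpa using this.1
  -- proj traces
  have hPdef : projPos Δ hH = ∑ i, if 0 < lam i then outer i else 0 := rfl
  have hQdef : projNonpos Δ hH = ∑ i, if lam i ≤ 0 then outer i else 0 := rfl
  have hPQ : projPos Δ hH + projNonpos Δ hH = 1 := by
    rw [hPdef, hQdef, ← Finset.sum_add_distrib, ← hres]
    refine Finset.sum_congr rfl fun i _ => ?_
    rcases lt_or_ge 0 (lam i) with h | h
    · rw [if_pos h, if_neg (not_le.mpr h), add_zero]
    · rw [if_neg (not_lt.mpr h), if_pos h, zero_add]
  -- trace of M * projPos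
  have htrMP : ∀ M : Matrix (Fin n) (Fin n) ℂ, (M * projPos Δ hH).trace
      = ∑ i, if 0 < lam i then star (v i) ⬝ᵥ (M *ᵥ v i) else 0 := by
    intro M
    rw [hPdef, Finset.mul_sum, Matrix.trace_sum]
    refine Finset.sum_congr rfl fun i _ => ?_
    split
    · exact htr i M
    · simp
  have htrDP : (Δ * projPos Δ hH).trace = ∑ i, if 0 < lam i then (lam i : ℂ) else 0 := by
    rw [hPdef, Finset.mul_sum, Matrix.trace_sum]
    refine Finset.sum_congr rfl fun i _ => ?_
    split
    · rw [hDouter i, Matrix.trace_smul, htrouter i, smul_eq_mul, mul_one]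
    · simp
  have htrDT : (Δ * T).trace = ∑ i, (lam i : ℂ) * s i := by
    conv_lhs => rw [hΔspec, Finset.sum_mul]
    rw [Matrix.trace_sum]
    refine Finset.sum_congr rfl fun i _ => ?_
    rw [Matrix.smul_mul, Matrix.trace_smul, smul_eq_mul]
    rw [Matrix.trace_mul_comm, htr i T]
  -- key inequality
  have key : 0 ≤ (Δ * projPos Δ hH).trace - (Δ * T).trace := by
    rw [htrDP, htrDT, ← Finset.sum_sub_distrib]
    refine Finset.sum_nonneg fun i _ => ?_
    rw [hsr i]
    have : (if 0 < lam i then (lam i : ℂ) else 0) - (lam i : ℂ) * (r i : ℂ)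
        = (((if 0 < lam i then lam i else 0) - lam i * r i : ℝ) : ℂ) := by
      push_cast
      split <;> simp
    rw [this]
    rw [Complex.zero_le_real]
    rcases lt_or_ge 0 (lam i) with h | h
    · rw [if_pos h]
      nlinarith [hr1 i]
    · rw [if_neg (not_lt.mpr h)]
      nlinarith [hr0 i]
  -- algebra
  have h1 : (ρ₀ * projPos Δ hH).trace = 1 - (ρ₀ * projNonpos Δ hH).trace := by
    have h2 : ρ₀ * projPos Δ hH + ρ₀ * projNonpos Δ hH = ρ₀ := by
      rw [← Matrix.mul_add, hPQ, mul_one]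
    have h3 := congrArg Matrix.trace h2
    rw [Matrix.trace_add, hρ₀tr] at h3
    linear_combination h3
  have htrD : ∀ X : Matrix (Fin n) (Fin n) ℂ,
      (Δ * X).trace = (ρ₀ * X).trace - (t : ℂ) * (ρ₁ * X).trace := by
    intro X
    show ((ρ₀ - (t : ℂ) • ρ₁) * X).trace = _
    simp only [Matrix.sub_mul, Matrix.smul_mul, Matrix.trace_sub, Matrix.trace_smul, smul_eq_mul]
  have expand : (Δ * projPos Δ hH).trace - (Δ * T).trace
      = (1 - (ρ₀ * T).trace) - ((ρ₀ * projNonpos Δ hH).trace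
        + (t : ℂ) * ((ρ₁ * projPos Δ hH).trace - (ρ₁ * T).trace)) := by
    rw [htrD, htrD, h1]
    ring
  rw [expand] at key
  have final := sub_nonneg.mp key
  exact final
end

section
/- Let ρ₀, ρ₁ be density matrices, t ≥ 0, β ∈ [0,1], and let T be any Hermitian test with 0 ≤ T ≤ I and tr(ρ₁ T) ≤ β. Then the type-I error 1 − tr(ρ₀ T) satisfies 1 − tr(ρ₀ T) ≥ tr(ρ₀ · {ρ₀ − t ρ₁ ≤ 0}) − t β. -/
open ComplexOrder

namespace NPAux

open Matrix

variable {m : Type*} [Fintype m] [DecidableEq m]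

lemma trace_mul_vecMulVec (M : Matrix m m ℂ) (a : m → ℂ) :
    (M * vecMulVec a (star a)).trace = star a ⬝ᵥ (M *ᵥ a) := by
  simp only [trace, diag, mul_apply, vecMulVec_apply, dotProduct, mulVec, Pi.star_apply]
  simp only [dotProduct, Finset.sum_mul, Finset.mul_sum]
  congr 1; ext i; congr 1; ext k; ring

lemma mul_vecMulVec (A : Matrix m m ℂ) (a b : m → ℂ) :
    A * vecMulVec a b = vecMulVec (A *ᵥ a) b := by
  ext i j
  simp [mul_apply, vecMulVec_apply, mulVec, dotProduct, Finset.sum_mul, mul_assoc]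

lemma vecMulVec_smul_left (a b : m → ℂ) (c : ℂ) :
    vecMulVec (c • a) b = c • vecMulVec a b := by
  ext i j; simp [vecMulVec_apply, mul_assoc]

lemma sum_proj (A : Matrix m m ℂ) (hA : A.IsHermitian) :
    ∑ i : m, vecMulVec (fun j => hA.eigenvectorBasis i j) (star fun j => hA.eigenvectorBasis i j)
      = 1 := by
  have h := (Matrix.mem_unitaryGroup_iff).mp (hA.eigenvectorUnitary).2
  ext j k
  have := congrFun (congrFun h j) k
  simp only [mul_apply, star_apply, Matrix.IsHermitian.eigenvectorUnitary_apply] at this ⊢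
  rw [← this]
  simp [Matrix.sum_apply, vecMulVec_apply]

lemma dot_self_one (A : Matrix m m ℂ) (hA : A.IsHermitian) (i : m) :
    (star fun j => hA.eigenvectorBasis i j) ⬝ᵥ (fun j => hA.eigenvectorBasis i j) = 1 := by
  have := orthonormal_iff_ite.mp hA.eigenvectorBasis.orthonormal i i
  rw [EuclideanSpace.inner_eq_star_dotProduct] at this
  rw [dotProduct_comm]
  simpa using this

lemma mulVec_eig (A : Matrix m m ℂ) (hA : A.IsHermitian) (i : m) :
    (A *ᵥ fun j => hA.eigenvectorBasis i j)
      = (hA.eigenvalues i : ℂ) • fun j => hA.eigenvectorBasis i j := by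
  have h := hA.mulVec_eigenvectorBasis i
  funext j
  have := congrFun h j
  simpa [Complex.real_smul] using this

lemma dot_eig (A : Matrix m m ℂ) (hA : A.IsHermitian) (i : m) :
    (star fun j => hA.eigenvectorBasis i j) ⬝ᵥ (A *ᵥ fun j => hA.eigenvectorBasis i j)
      = (hA.eigenvalues i : ℂ) := by
  rw [mulVec_eig, dotProduct_smul, dot_self_one, smul_eq_mul, mul_one]

lemma spectral_sum (A : Matrix m m ℂ) (hA : A.IsHermitian) :
    A = ∑ i : m, (hA.eigenvalues i : ℂ) •
      vecMulVec (fun j => hA.eigenvectorBasis i j) (star fun j => hA.eigenvectorBasis i j) := by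
  calc A = A * ∑ i : m, vecMulVec (fun j => hA.eigenvectorBasis i j)
            (star fun j => hA.eigenvectorBasis i j) := by rw [sum_proj A hA, mul_one]
    _ = ∑ i : m, A * vecMulVec (fun j => hA.eigenvectorBasis i j)
            (star fun j => hA.eigenvectorBasis i j) := by rw [Finset.mul_sum]
    _ = ∑ i : m, (hA.eigenvalues i : ℂ) • vecMulVec (fun j => hA.eigenvectorBasis i j)
            (star fun j => hA.eigenvectorBasis i j) := by
        refine Finset.sum_congr rfl fun i _ => ?_
        rw [mul_vecMulVec, mulVec_eig, vecMulVec_smul_left]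

lemma trace_mul_projNonpos (M A : Matrix m m ℂ) (hA : A.IsHermitian) :
    (M * projNonpos A hA).trace = ∑ i : m, if hA.eigenvalues i ≤ 0 then
      (star fun j => hA.eigenvectorBasis i j) ⬝ᵥ (M *ᵥ fun j => hA.eigenvectorBasis i j)
      else 0 := by
  rw [projNonpos, Finset.mul_sum, trace_sum]
  refine Finset.sum_congr rfl fun i _ => ?_
  split_ifs with h
  · exact trace_mul_vecMulVec M _
  · simp

lemma trace_hermitian_mul (A : Matrix m m ℂ) (hA : A.IsHermitian) (S : Matrix m m ℂ) :
    (A * S).trace = ∑ i : m, (hA.eigenvalues i : ℂ) *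
      ((star fun j => hA.eigenvectorBasis i j) ⬝ᵥ (S *ᵥ fun j => hA.eigenvectorBasis i j)) := by
  conv_lhs => rw [spectral_sum A hA]
  rw [Finset.sum_mul, trace_sum]
  refine Finset.sum_congr rfl fun i _ => ?_
  rw [smul_mul_assoc, trace_smul, trace_mul_comm, trace_mul_vecMulVec, smul_eq_mul]

lemma sum_dot (M A : Matrix m m ℂ) (hA : A.IsHermitian) :
    ∑ i : m, (star fun j => hA.eigenvectorBasis i j) ⬝ᵥ (M *ᵥ fun j => hA.eigenvectorBasis i j)
      = M.trace := by
  have : (M * ∑ i : m, vecMulVec (fun j => hA.eigenvectorBasis i j)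
      (star fun j => hA.eigenvectorBasis i j)).trace = M.trace := by
    rw [sum_proj A hA, mul_one]
  rw [Finset.mul_sum, trace_sum] at this
  rw [← this]
  exact Finset.sum_congr rfl fun i _ => (trace_mul_vecMulVec M _).symm

end NPAux

/-- Meta-converse relaxation (eqn. NPcorollary-2): for density matrices `ρ₀, ρ₁`, `t ≥ 0`,
`β ∈ [0,1]` and any test `0 ≤ T ≤ I` with `tr(ρ₁ T) ≤ β`,
`1 − tr(ρ₀ T) ≥ tr(ρ₀ {ρ₀ − tρ₁ ≤ 0}) − tβ`. -/
theorem np_relaxed_lower_bound {n : ℕ} (ρ₀ ρ₁ T : Matrix (Fin n) (Fin n) ℂ)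
    (hρ₀ : ρ₀.PosSemidef) (hρ₀tr : ρ₀.trace = 1)
    (hρ₁ : ρ₁.PosSemidef) (hρ₁tr : ρ₁.trace = 1)
    (t β : ℝ) (ht : 0 ≤ t) (hβ0 : 0 ≤ β) (hβ1 : β ≤ 1)
    (hT : T.IsHermitian) (hT0 : T.PosSemidef)
    (hT1 : ((1 : Matrix (Fin n) (Fin n) ℂ) - T).PosSemidef)
    (hTβ : (ρ₁ * T).trace ≤ (β : ℂ))
    (hH : (ρ₀ - (t : ℂ) • ρ₁).IsHermitian) :
    (ρ₀ * projNonpos (ρ₀ - (t : ℂ) • ρ₁) hH).trace - (t : ℂ) * (β : ℂ)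
      ≤ 1 - (ρ₀ * T).trace := by
  open Matrix NPAux in
  set A : Matrix (Fin n) (Fin n) ℂ := ρ₀ - (t : ℂ) • ρ₁ with hA
  set S : Matrix (Fin n) (Fin n) ℂ := 1 - T with hSdef
  set P : Matrix (Fin n) (Fin n) ℂ := projNonpos A hH with hPdef
  set v : Fin n → Fin n → ℂ := fun i => fun j => hH.eigenvectorBasis i j with hv
  set lam : Fin n → ℝ := hH.eigenvalues with hlam
  -- quadratic forms
  have hq0 : ∀ i, (0:ℂ) ≤ star (v i) ⬝ᵥ (ρ₀ *ᵥ v i) := fun i => hρ₀.dotProduct_mulVec_nonneg (v i)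
  have hq1 : ∀ i, (0:ℂ) ≤ star (v i) ⬝ᵥ (ρ₁ *ᵥ v i) := fun i => hρ₁.dotProduct_mulVec_nonneg (v i)
  have hqT : ∀ i, (0:ℂ) ≤ star (v i) ⬝ᵥ (T *ᵥ v i) := fun i => hT0.dotProduct_mulVec_nonneg (v i)
  have hqS : ∀ i, (0:ℂ) ≤ star (v i) ⬝ᵥ (S *ᵥ v i) := fun i => hT1.dotProduct_mulVec_nonneg (v i)
  -- S-form identity : ⟨v,Sv⟩ = 1 - ⟨v,Tv⟩
  have hsub : ∀ i, star (v i) ⬝ᵥ (S *ᵥ v i) = 1 - star (v i) ⬝ᵥ (T *ᵥ v i) := by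
    intro i
    rw [hSdef, sub_mulVec, dotProduct_sub, one_mulVec]
    congr 1
    exact dot_self_one A hH i
  -- decomposition of traces
  have hdecomp : ∀ M : Matrix (Fin n) (Fin n) ℂ,
      (ρ₀ * M).trace = (A * M).trace + (t : ℂ) * (ρ₁ * M).trace := by
    intro M
    rw [hA, sub_mul, smul_mul_assoc, trace_sub, trace_smul, smul_eq_mul]
    ring
  -- trace with S
  have hS0 : (ρ₀ * S).trace = 1 - (ρ₀ * T).trace := by
    rw [hSdef, mul_sub, mul_one, trace_sub, hρ₀tr]
  have hS1 : (ρ₁ * S).trace = 1 - (ρ₁ * T).trace := by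
    rw [hSdef, mul_sub, mul_one, trace_sub, hρ₁tr]
  -- key inequality 1 : tr(A P) ≤ tr(A S)
  have h1 : (A * P).trace ≤ (A * S).trace := by
    rw [hPdef, trace_mul_projNonpos A A hH, trace_hermitian_mul A hH S]
    refine Finset.sum_le_sum fun i _ => ?_
    by_cases h : lam i ≤ 0
    · rw [if_pos h, dot_eig A hH i]
      have hlc : (0:ℂ) ≤ -(lam i : ℂ) := by
        rw [← Complex.ofReal_neg]
        exact_mod_cast neg_nonneg.mpr h
      have hkey : (lam i : ℂ) * (star (v i) ⬝ᵥ (S *ᵥ v i)) - (lam i : ℂ)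
          = (-(lam i : ℂ)) * (1 - star (v i) ⬝ᵥ (S *ᵥ v i)) := by ring
      have hterm : (0:ℂ) ≤ 1 - star (v i) ⬝ᵥ (S *ᵥ v i) := by
        rw [hsub i]; simpa using hqT i
      have : (0:ℂ) ≤ (lam i : ℂ) * (star (v i) ⬝ᵥ (S *ᵥ v i)) - (lam i : ℂ) := by
        rw [hkey]; exact mul_nonneg hlc hterm
      exact sub_nonneg.mp this
    · rw [if_neg h]
      have hlc : (0:ℂ) ≤ (lam i : ℂ) := by
        exact_mod_cast le_of_lt (lt_of_not_ge h)
      exact mul_nonneg hlc (hqS i)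
  -- key inequality 2 : tr(ρ₁ P) ≤ 1
  have h2 : (ρ₁ * P).trace ≤ 1 := by
    rw [hPdef, trace_mul_projNonpos ρ₁ A hH]
    calc (∑ i, if lam i ≤ 0 then star (v i) ⬝ᵥ (ρ₁ *ᵥ v i) else 0)
        ≤ ∑ i, star (v i) ⬝ᵥ (ρ₁ *ᵥ v i) := by
          refine Finset.sum_le_sum fun i _ => ?_
          split_ifs with h
          · exact le_refl _
          · exact hq1 i
      _ = ρ₁.trace := sum_dot ρ₁ A hH
      _ = 1 := hρ₁tr
  -- assemble
  rw [← hS0, hdecomp P, hdecomp S]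
  have h3 : (t : ℂ) * (ρ₁ * P).trace - (t : ℂ) * (β : ℂ) ≤ (t : ℂ) * (ρ₁ * S).trace := by
    rw [hS1, ← mul_sub]
    have hsub2 : (ρ₁ * P).trace - (β : ℂ) ≤ 1 - (ρ₁ * T).trace := sub_le_sub h2 hTβ
    have ht' : (0:ℂ) ≤ (t : ℂ) := by exact_mod_cast ht
    exact mul_le_mul_of_nonneg_left hsub2 ht'
  have := add_le_add h1 h3
  calc (A * P).trace + (t : ℂ) * (ρ₁ * P).trace - (t : ℂ) * (β : ℂ)
      = (A * P).trace + ((t : ℂ) * (ρ₁ * P).trace - (t : ℂ) * (β : ℂ)) := by ring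
    _ ≤ (A * S).trace + (t : ℂ) * (ρ₁ * S).trace := this
end

section
/- Let τ₁,…,τ_M be density matrices with priors p₁,…,p_M summing to 1, and let μ₀ be a density matrix and t ≥ 0. Then the minimum average error probability ε* = min over POVMs {Πᵢ} of (1 − Σᵢ pᵢ tr(τᵢ Πᵢ)) satisfies ε* ≥ Σᵢ pᵢ tr(τᵢ · {pᵢ τᵢ − t μ₀ ≤ 0}) − t. -/
open ComplexOrder

namespace HNaux

open Matrix

lemma posSemidef_vecMulVec {m : Type*} [Fintype m] (v : m → ℂ) :
    (vecMulVec v (star v)).PosSemidef := by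
  have h : vecMulVec v (star v) = replicateCol (Fin 1) v * (replicateCol (Fin 1) v)ᴴ := by
    rw [conjTranspose_replicateCol]; exact vecMulVec_eq (Fin 1) v (star v)
  rw [h]
  exact posSemidef_self_mul_conjTranspose _

lemma smul_posSemidef {m : Type*} [Fintype m] {c : ℝ} (hc : 0 ≤ c)
    {B : Matrix m m ℂ} (hB : B.PosSemidef) : ((c : ℂ) • B).PosSemidef := by
  refine posSemidef_iff_dotProduct_mulVec.mpr ⟨?_, ?_⟩
  · have hs : star (c : ℂ) = (c : ℂ) := by simp
    rw [Matrix.IsHermitian, conjTranspose_smul, hB.1, hs]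
  · intro x
    rw [smul_mulVec, dotProduct_smul, smul_eq_mul]
    exact mul_nonneg (by exact_mod_cast hc) (hB.dotProduct_mulVec_nonneg x)

lemma psd_trace_nonneg {m : Type*} [Fintype m] [DecidableEq m]
    {B : Matrix m m ℂ} (hB : B.PosSemidef) : 0 ≤ B.trace := by
  rw [Matrix.trace]
  refine Finset.sum_nonneg fun i _ => ?_
  have := hB.dotProduct_mulVec_nonneg (Pi.single i 1)
  simpa [dotProduct, Pi.single_apply, mulVec_single] using this

lemma trace_mul_nonneg {m : Type*} [Fintype m] [DecidableEq m]
    {B C : Matrix m m ℂ} (hB : B.PosSemidef) (hC : C.PosSemidef) :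
    0 ≤ (B * C).trace := by
  obtain ⟨s, hs, rfl⟩ : ∃ s : Matrix m m ℂ, s.PosSemidef ∧ s * s = B :=
    by
      open scoped MatrixOrder in
      exact ⟨CFC.sqrt B, (CFC.sqrt_nonneg B).posSemidef, CFC.sqrt_mul_sqrt_self B hB.nonneg⟩
  have := psd_trace_nonneg (hC.conjTranspose_mul_mul_same s)
  rwa [hs.1, trace_mul_cycle] at this

lemma mul_vecMulVec {m : Type*} [Fintype m] (B : Matrix m m ℂ) (u w : m → ℂ) :
    B * vecMulVec u w = vecMulVec (B *ᵥ u) w := by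
  ext i j
  simp [Matrix.mul_apply, vecMulVec_apply, mulVec, dotProduct, Finset.sum_mul, mul_assoc]

variable {m : Type*} [Fintype m] [DecidableEq m] {A : Matrix m m ℂ} (hA : A.IsHermitian)

lemma sum_rank1_eq_one :
    ∑ i : m, vecMulVec (fun j => hA.eigenvectorBasis i j) (star fun j => hA.eigenvectorBasis i j)
      = (1 : Matrix m m ℂ) := by
  have hU : (hA.eigenvectorUnitary : Matrix m m ℂ) * star (hA.eigenvectorUnitary : Matrix m m ℂ)
      = 1 := Matrix.mem_unitaryGroup_iff.mp hA.eigenvectorUnitary.2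
  ext k l
  have := congrFun (congrFun hU k) l
  simp only [Matrix.mul_apply, Matrix.star_apply, IsHermitian.eigenvectorUnitary_apply] at this
  simpa [Matrix.sum_apply, vecMulVec_apply] using this

lemma A_mul_rank1 (i : m) :
    A * vecMulVec (fun j => hA.eigenvectorBasis i j) (star fun j => hA.eigenvectorBasis i j)
      = ((hA.eigenvalues i : ℂ)) •
        vecMulVec (fun j => hA.eigenvectorBasis i j) (star fun j => hA.eigenvectorBasis i j) := by
  rw [mul_vecMulVec]
  have h := hA.mulVec_eigenvectorBasis i
  ext k l
  simp only [vecMulVec_apply, Matrix.smul_apply, smul_eq_mul]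
  have hk : (A *ᵥ fun j => hA.eigenvectorBasis i j) k
      = (hA.eigenvalues i : ℂ) * hA.eigenvectorBasis i k := by
    have := congrFun h k
    simpa [Complex.real_smul] using this
  rw [hk, mul_assoc]

lemma projPos_add_projNonpos : projPos A hA + projNonpos A hA = 1 := by
  rw [projPos, projNonpos, ← Finset.sum_add_distrib, ← sum_rank1_eq_one hA]
  refine Finset.sum_congr rfl fun i _ => ?_
  by_cases h : hA.eigenvalues i ≤ 0
  · rw [if_neg (not_lt.mpr h), if_pos h, zero_add]
  · rw [if_pos (not_le.mp h), if_neg h, add_zero]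

lemma posSemidef_projPos : (projPos A hA).PosSemidef := by
  rw [projPos]
  refine Finset.sum_induction _ _ (fun a b ha hb => ha.add hb) Matrix.PosSemidef.zero fun i _ => ?_
  split_ifs
  · exact posSemidef_vecMulVec _
  · exact Matrix.PosSemidef.zero

lemma posSemidef_A_mul_projPos : (A * projPos A hA).PosSemidef := by
  rw [projPos, Finset.mul_sum]
  refine Finset.sum_induction _ _ (fun a b ha hb => ha.add hb) Matrix.PosSemidef.zero fun i _ => ?_
  split_ifs with h
  · rw [A_mul_rank1 hA i]
    exact smul_posSemidef h.le (posSemidef_vecMulVec _)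
  · simpa using Matrix.PosSemidef.zero

lemma posSemidef_neg_A_mul_projNonpos : (-(A * projNonpos A hA)).PosSemidef := by
  rw [projNonpos, Finset.mul_sum, ← Finset.sum_neg_distrib]
  refine Finset.sum_induction _ _ (fun a b ha hb => ha.add hb) Matrix.PosSemidef.zero fun i _ => ?_
  split_ifs with h
  · rw [A_mul_rank1 hA i, ← neg_smul]
    have hcast : (-(hA.eigenvalues i : ℂ)) = ((-hA.eigenvalues i : ℝ) : ℂ) := by push_cast; ring
    rw [hcast]
    exact smul_posSemidef (by linarith) (posSemidef_vecMulVec _)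
  · simpa using Matrix.PosSemidef.zero

lemma key_step {m : Type*} [Fintype m] [DecidableEq m]
    {τ μ₀ W : Matrix m m ℂ} (hτtr : τ.trace = 1)
    (hμ₀ : μ₀.PosSemidef) {p t : ℝ} (ht : 0 ≤ t)
    (hA : ((p : ℂ) • τ - (t : ℂ) • μ₀).IsHermitian)
    (hW : W.PosSemidef) (hW1 : ((1 : Matrix m m ℂ) - W).PosSemidef) :
    (p : ℂ) * (τ * projNonpos ((p : ℂ) • τ - (t : ℂ) • μ₀) hA).trace + (p : ℂ) * (τ * W).trace
      ≤ (p : ℂ) + (t : ℂ) * (μ₀ * W).trace := by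
  set A := (p : ℂ) • τ - (t : ℂ) • μ₀ with hAdef
  set P := projPos A hA with hPdef
  set Q := projNonpos A hA with hQdef
  have h1 : (A * Q * W).trace ≤ 0 := by
    have h := trace_mul_nonneg (posSemidef_neg_A_mul_projNonpos hA) hW
    rw [neg_mul, trace_neg] at h
    exact neg_nonneg.mp h
  have h2 : (A * P * W).trace ≤ (A * P).trace := by
    have h := trace_mul_nonneg (posSemidef_A_mul_projPos hA) hW1
    rw [mul_sub, mul_one, trace_sub] at h
    exact sub_nonneg.mp h
  have h3 : 0 ≤ (t : ℂ) * (μ₀ * P).trace := by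
    have h := trace_mul_nonneg (smul_posSemidef ht hμ₀) (posSemidef_projPos hA)
    rwa [smul_mul_assoc, trace_smul, smul_eq_mul] at h
  have hPQ : A * P + A * Q = A := by
    rw [← mul_add, projPos_add_projNonpos hA, mul_one]
  have I1 : (A * W).trace = (p : ℂ) * (τ * W).trace - (t : ℂ) * (μ₀ * W).trace := by
    rw [hAdef, sub_mul, smul_mul_assoc, smul_mul_assoc, trace_sub, trace_smul, trace_smul,
      smul_eq_mul, smul_eq_mul]
  have I2 : (A * P * W).trace + (A * Q * W).trace = (A * W).trace := by
    rw [← trace_add, ← add_mul, hPQ]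
  have I4 : (A * P).trace = (p : ℂ) * (τ * P).trace - (t : ℂ) * (μ₀ * P).trace := by
    rw [hAdef, sub_mul, smul_mul_assoc, smul_mul_assoc, trace_sub, trace_smul, trace_smul,
      smul_eq_mul, smul_eq_mul]
  have I5 : (τ * P).trace = 1 - (τ * Q).trace := by
    have hP1 : P = 1 - Q := eq_sub_of_add_eq (projPos_add_projNonpos hA)
    rw [hP1, mul_sub, mul_one, trace_sub, hτtr]
  have main : (p : ℂ) * (τ * W).trace - (t : ℂ) * (μ₀ * W).trace
      ≤ (p : ℂ) - (p : ℂ) * (τ * Q).trace := by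
    calc (p : ℂ) * (τ * W).trace - (t : ℂ) * (μ₀ * W).trace
        = (A * P * W).trace + (A * Q * W).trace := by rw [I2, I1]
      _ ≤ (A * P).trace + 0 := add_le_add h2 h1
      _ = (p : ℂ) * (τ * P).trace - (t : ℂ) * (μ₀ * P).trace := by rw [add_zero, I4]
      _ ≤ (p : ℂ) * (τ * P).trace := sub_le_self _ h3
      _ = (p : ℂ) - (p : ℂ) * (τ * Q).trace := by rw [I5]; ring
  have h := sub_le_sub_iff.mp main
  calc (p : ℂ) * (τ * Q).trace + (p : ℂ) * (τ * W).trace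
      = (p : ℂ) * (τ * W).trace + (p : ℂ) * (τ * Q).trace := by ring
    _ ≤ (p : ℂ) + (t : ℂ) * (μ₀ * W).trace := h

end HNaux

/-- Hayashi–Nagaoka-type lower bound (Corollary 1): for any POVM `{Pov i}`,
`1 − Σᵢ pᵢ tr(τᵢ Povᵢ) ≥ Σᵢ pᵢ tr(τᵢ {pᵢτᵢ − tμ₀ ≤ 0}) − t`; hence the minimum
average error probability satisfies the same bound. -/
theorem hn_lower_bound {n M : ℕ}
    (τ : Fin M → Matrix (Fin n) (Fin n) ℂ)
    (hτ : ∀ i, (τ i).PosSemidef ∧ (τ i).trace = 1)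
    (p : Fin M → ℝ) (hp : ∀ i, 0 ≤ p i) (hpsum : ∑ i, p i = 1)
    (μ₀ : Matrix (Fin n) (Fin n) ℂ) (hμ₀ : μ₀.PosSemidef) (hμ₀tr : μ₀.trace = 1)
    (t : ℝ) (ht : 0 ≤ t)
    (hH : ∀ i, ((p i : ℂ) • τ i - (t : ℂ) • μ₀).IsHermitian)
    (Pov : Fin M → Matrix (Fin n) (Fin n) ℂ)
    (hPov : ∀ i, (Pov i).PosSemidef)
    (hPovsum : ∑ i, Pov i = 1) :
    (∑ i, (p i : ℂ) * (τ i * projNonpos ((p i : ℂ) • τ i - (t : ℂ) • μ₀) (hH i)).trace)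
      - (t : ℂ)
    ≤ 1 - ∑ i, (p i : ℂ) * (τ i * Pov i).trace := by
  have hone : ∀ i, ((1 : Matrix (Fin n) (Fin n) ℂ) - Pov i).PosSemidef := by
    intro i
    have hsub : (1 : Matrix (Fin n) (Fin n) ℂ) - Pov i = ∑ j ∈ Finset.univ.erase i, Pov j := by
      rw [← hPovsum, ← Finset.add_sum_erase _ _ (Finset.mem_univ i), add_sub_cancel_left]
    rw [hsub]
    exact Finset.sum_induction _ _ (fun a b ha hb => ha.add hb) Matrix.PosSemidef.zero
      (fun j _ => hPov j)
  have hkey : ∀ i,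
      (p i : ℂ) * (τ i * projNonpos ((p i : ℂ) • τ i - (t : ℂ) • μ₀) (hH i)).trace
        + (p i : ℂ) * (τ i * Pov i).trace
      ≤ (p i : ℂ) + (t : ℂ) * (μ₀ * Pov i).trace :=
    fun i => HNaux.key_step (hτ i).2 hμ₀ ht (hH i) (hPov i) (hone i)
  have hsum := Finset.sum_le_sum (fun i (_ : i ∈ Finset.univ) => hkey i)
  rw [Finset.sum_add_distrib, Finset.sum_add_distrib] at hsum
  have e1 : ∑ i, (p i : ℂ) = 1 := by
    rw [← Complex.ofReal_sum, hpsum, Complex.ofReal_one]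
  have e2 : ∑ i, (t : ℂ) * (μ₀ * Pov i).trace = (t : ℂ) := by
    rw [← Finset.mul_sum, ← Matrix.trace_sum, ← Finset.mul_sum, hPovsum, mul_one, hμ₀tr, mul_one]
  rw [e1, e2] at hsum
  rw [sub_le_sub_iff]
  exact hsum
end

section
/- Suppose a POVM {Π₁*,…,Π_M*} satisfies the Holevo–Yuen–Kennedy–Lax conditions for states τ₁,…,τ_M with priors p₁,…,p_M: with Λ = Σᵢ pᵢ τᵢ Πᵢ* Hermitian, (Λ − p_m τ_m)Π_m* = 0 = Π_m*(Λ − p_m τ_m) and Λ − p_m τ_m ≥ 0 for all m. Then for any other POVM {Π₁,…,Π_M}, Σ_m p_m tr(τ_m Π_m*) ≥ Σ_m p_m tr(τ_m Π_m). -/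
open ComplexOrder

lemma psd_trace_nonneg {n : ℕ} {A : Matrix (Fin n) (Fin n) ℂ}
    (hA : A.PosSemidef) : 0 ≤ A.trace := by
  rw [Matrix.trace]
  apply Finset.sum_nonneg
  intro i _
  have := hA.diag_nonneg (i := i)
  simpa [dotProduct, Matrix.mulVec, Pi.single_apply] using this

open scoped MatrixOrder in
lemma psd_trace_mul_nonneg {n : ℕ} {A B : Matrix (Fin n) (Fin n) ℂ}
    (hA : A.PosSemidef) (hB : B.PosSemidef) : 0 ≤ (A * B).trace := by
  have h1 : (A * B).trace = (CFC.sqrt A * B * CFC.sqrt A).trace := by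
    conv_lhs => rw [← CFC.sqrt_mul_sqrt_self A hA.nonneg]
    rw [mul_assoc, Matrix.trace_mul_comm]
  rw [h1]
  apply psd_trace_nonneg
  have := hB.conjTranspose_mul_mul_same (CFC.sqrt A)
  rwa [(Matrix.nonneg_iff_posSemidef.mp (CFC.sqrt_nonneg A)).isHermitian.eq] at this

/-- Sufficiency of the Holevo–Yuen–Kennedy–Lax conditions: a POVM satisfying them
achieves the maximal success probability among all POVMs. -/
theorem hykl_sufficiency {n M : ℕ}
    (τ : Fin M → Matrix (Fin n) (Fin n) ℂ)
    (hτ : ∀ i, (τ i).PosSemidef ∧ (τ i).trace = 1)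
    (p : Fin M → ℝ) (hp : ∀ i, 0 ≤ p i) (hpsum : ∑ i, p i = 1)
    (Ps : Fin M → Matrix (Fin n) (Fin n) ℂ)
    (hPs : ∀ i, (Ps i).PosSemidef)
    (hPssum : ∑ i, Ps i = 1)
    (Λ : Matrix (Fin n) (Fin n) ℂ)
    (hΛdef : Λ = ∑ i, (p i : ℂ) • (τ i * Ps i))
    (hΛherm : Λ.IsHermitian)
    (hstat1 : ∀ m, (Λ - (p m : ℂ) • τ m) * Ps m = 0)
    (hstat2 : ∀ m, Ps m * (Λ - (p m : ℂ) • τ m) = 0)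
    (hpos : ∀ m, (Λ - (p m : ℂ) • τ m).PosSemidef)
    (Pov : Fin M → Matrix (Fin n) (Fin n) ℂ)
    (hPov : ∀ i, (Pov i).PosSemidef)
    (hPovsum : ∑ i, Pov i = 1) :
    ∑ m, (p m : ℂ) * (τ m * Pov m).trace ≤ ∑ m, (p m : ℂ) * (τ m * Ps m).trace := by
  have hRHS : ∑ m, (p m : ℂ) * (τ m * Ps m).trace = Λ.trace := by
    rw [hΛdef, Matrix.trace_sum]
    simp [Matrix.trace_smul, smul_eq_mul]
  have hsum : ∑ m, ((Λ - (p m : ℂ) • τ m) * Pov m).trace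
      = Λ.trace - ∑ m, (p m : ℂ) * (τ m * Pov m).trace := by
    have : ∑ m, ((Λ - (p m : ℂ) • τ m) * Pov m).trace
        = ∑ m, ((Λ * Pov m).trace - (p m : ℂ) * (τ m * Pov m).trace) := by
      apply Finset.sum_congr rfl
      intro m _
      rw [Matrix.sub_mul, Matrix.trace_sub, Matrix.smul_mul, Matrix.trace_smul,
        smul_eq_mul]
    rw [this, Finset.sum_sub_distrib]
    congr 1
    rw [← Matrix.trace_sum]
    congr 1
    rw [← Finset.mul_sum, hPovsum, mul_one]
  have hnn : 0 ≤ ∑ m, ((Λ - (p m : ℂ) • τ m) * Pov m).trace := by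
    apply Finset.sum_nonneg
    intro m _
    exact psd_trace_mul_nonneg (hpos m) (hPov m)
  rw [hsum] at hnn
  rw [hRHS]
  exact sub_nonneg.mp hnn
end

section
/- For the M = 4 testing problem with qubit states τ₁ = |0⟩⟨0|, τ₂ = |+⟩⟨+|, τ₃ = |−⟩⟨−|, τ₄ = I/2 and priors p₁ = 2/5, p₂ = p₃ = p₄ = 1/5, the POVM Π₁ = [[8/9,0],[0,0]], Π₂ = [[1/18,1/6],[1/6,1/2]], Π₃ = [[1/18,−1/6],[−1/6,1/2]], Π₄ = 0 is a valid POVM whose average error probability equals 7/15, and it satisfies the Holevo–Yuen–Kennedy–Lax optimality conditions (hence ε* = 7/15). -/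
open ComplexOrder Matrix
set_option maxHeartbeats 1000000

lemma key_ineq (a b c U V S : ℝ) (ha : 0 ≤ a) (hc : 0 ≤ c) (hb : b^2 ≤ a*c)
    (hU : 0 ≤ U) (hV : 0 ≤ V) (hS : S^2 ≤ U*V) : 0 ≤ a*U + 2*b*S + c*V := by
  have hPQ : 0 ≤ (a*U + c*V)^2 - 4*b^2*S^2 := by
    nlinarith [sq_nonneg (a*U - c*V), mul_nonneg (mul_nonneg ha hc) (sub_nonneg.2 hS),
      mul_nonneg (sq_nonneg S) (sub_nonneg.2 hb)]
  by_contra h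
  push_neg at h
  nlinarith [hPQ, mul_nonneg ha hU, mul_nonneg hc hV]

lemma psd2 {M : Matrix (Fin 2) (Fin 2) ℂ} (a b c : ℝ)
    (h00 : M 0 0 = (a:ℂ)) (h01 : M 0 1 = (b:ℂ)) (h10 : M 1 0 = (b:ℂ)) (h11 : M 1 1 = (c:ℂ))
    (ha : 0 ≤ a) (hc : 0 ≤ c) (hd : b^2 ≤ a*c) : M.PosSemidef := by
  rw [Matrix.posSemidef_iff_dotProduct_mulVec]
  constructor
  · ext i j
    fin_cases i <;> fin_cases j <;>
      simp [Matrix.conjTranspose_apply, h00, h01, h10, h11]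
  · intro x
    have hexp : dotProduct (star x) (M.mulVec x)
        = (starRingEnd ℂ) (x 0) * (M 0 0 * x 0 + M 0 1 * x 1)
          + (starRingEnd ℂ) (x 1) * (M 1 0 * x 0 + M 1 1 * x 1) := by
      simp [dotProduct, Matrix.mulVec, Fin.sum_univ_two, mul_comm]
    rw [hexp, h00, h01, h10, h11, Complex.le_def]
    constructor
    · simp only [Complex.add_re, Complex.mul_re, Complex.mul_im, Complex.add_im,
        Complex.conj_re, Complex.conj_im, Complex.ofReal_re, Complex.ofReal_im,
        Complex.zero_re]
      ring_nf
      nlinarith [key_ineq a b c ((x 0).re^2+(x 0).im^2) ((x 1).re^2+(x 1).im^2)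
        ((x 0).re*(x 1).re + (x 0).im*(x 1).im) ha hc hd (by positivity) (by positivity)
        (by nlinarith [sq_nonneg ((x 0).re*(x 1).im - (x 0).im*(x 1).re)])]
    · simp only [Complex.add_im, Complex.mul_re, Complex.mul_im, Complex.add_re,
        Complex.conj_re, Complex.conj_im, Complex.ofReal_re, Complex.ofReal_im,
        Complex.zero_im]
      ring

lemma trace_nonneg_of_posSemidef {n : Type*} [Fintype n] [DecidableEq n]
    {M : Matrix n n ℂ} (hM : M.PosSemidef) : 0 ≤ M.trace := by
  rw [Matrix.trace]
  refine Finset.sum_nonneg fun i _ => ?_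
  have := hM.dotProduct_mulVec_nonneg (Pi.single i 1)
  simpa [dotProduct, Matrix.mulVec, Pi.single_apply] using this

lemma trace_mul_nonneg {n : Type*} [Fintype n] [DecidableEq n]
    {A B : Matrix n n ℂ} (hA : A.PosSemidef) (hB : B.PosSemidef) : 0 ≤ (A * B).trace := by
  obtain ⟨C, rfl⟩ : ∃ C : Matrix n n ℂ, B = Cᴴ * C := by
    open scoped MatrixOrder in exact CStarAlgebra.nonneg_iff_eq_star_mul_self.mp hB.nonneg
  rw [← Matrix.mul_assoc, Matrix.trace_mul_cycle]
  exact trace_nonneg_of_posSemidef (hA.mul_mul_conjTranspose_same C)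

/-- Example 1: for the four qubit states `τ₁ = |0⟩⟨0|`, `τ₂ = |+⟩⟨+|`, `τ₃ = |−⟩⟨−|`,
`τ₄ = I/2` with priors `2/5, 1/5, 1/5, 1/5`, the given POVM is valid, has average
error probability `7/15`, and satisfies the Holevo–Yuen–Kennedy–Lax conditions
(hence `ε* = 7/15`). -/
theorem example_qht :
    let τ : Fin 4 → Matrix (Fin 2) (Fin 2) ℂ :=
      ![!![1, 0; 0, 0],
        !![1/2, 1/2; 1/2, 1/2],
        !![1/2, -1/2; -1/2, 1/2],
        !![1/2, 0; 0, 1/2]]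
    let p : Fin 4 → ℂ := ![2/5, 1/5, 1/5, 1/5]
    let Pov : Fin 4 → Matrix (Fin 2) (Fin 2) ℂ :=
      ![!![8/9, 0; 0, 0],
        !![1/18, 1/6; 1/6, 1/2],
        !![1/18, -1/6; -1/6, 1/2],
        0]
    let Λ : Matrix (Fin 2) (Fin 2) ℂ := ∑ i, p i • (τ i * Pov i)
    (∀ i, (Pov i).PosSemidef) ∧
    (∑ i, Pov i = 1) ∧
    (1 - ∑ i, p i * (τ i * Pov i).trace = 7/15) ∧
    Λ.IsHermitian ∧
    (∀ m, (Λ - p m • τ m) * Pov m = 0) ∧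
    (∀ m, Pov m * (Λ - p m • τ m) = 0) ∧
    (∀ m, (Λ - p m • τ m).PosSemidef) ∧
    IsLeast {e : ℂ | ∃ Q : Fin 4 → Matrix (Fin 2) (Fin 2) ℂ,
        (∀ i, (Q i).PosSemidef) ∧ (∑ i, Q i = 1) ∧
        e = 1 - ∑ m, p m * (τ m * Q m).trace}
      (7/15) := by
  intro τ p Pov Λ
  have hΛ : Λ = !![2/5, 0; 0, 2/15] := by
    show ∑ i, p i • (τ i * Pov i) = _
    rw [Fin.sum_univ_four]
    ext i j
    fin_cases i <;> fin_cases j <;>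
      simp [τ, p, Pov, Matrix.mul_apply, Fin.sum_univ_two] <;> norm_num
  have hpsd : ∀ i, (Pov i).PosSemidef := by
    intro i
    fin_cases i
    · refine psd2 (8/9) 0 0 ?_ ?_ ?_ ?_ (by norm_num) (by norm_num) (by norm_num) <;>
        norm_num [Pov]
    · refine psd2 (1/18) (1/6) (1/2) ?_ ?_ ?_ ?_ (by norm_num) (by norm_num) (by norm_num) <;>
        norm_num [Pov]
    · refine psd2 (1/18) (-(1/6)) (1/2) ?_ ?_ ?_ ?_ (by norm_num) (by norm_num) (by norm_num) <;>
        norm_num [Pov]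
    · refine psd2 0 0 0 ?_ ?_ ?_ ?_ (by norm_num) (by norm_num) (by norm_num) <;>
        norm_num [Pov]
  have hsum : ∑ i, Pov i = 1 := by
    rw [Fin.sum_univ_four]
    ext i j
    fin_cases i <;> fin_cases j <;> simp [Pov, Matrix.one_apply] <;> norm_num
  have herr : 1 - ∑ i, p i * (τ i * Pov i).trace = 7/15 := by
    rw [Fin.sum_univ_four]
    simp [τ, p, Pov, Matrix.trace_fin_two, Matrix.mul_apply, Fin.sum_univ_two]
    norm_num
  have hherm : Λ.IsHermitian := by
    rw [hΛ]
    ext i j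
    fin_cases i <;> fin_cases j <;> simp [Matrix.conjTranspose_apply]
  have hmul : ∀ m, (Λ - p m • τ m) * Pov m = 0 := by
    intro m
    rw [hΛ]
    fin_cases m <;>
      · ext i j
        fin_cases i <;> fin_cases j <;>
          simp [τ, p, Pov, Matrix.mul_apply, Matrix.sub_apply, Fin.sum_univ_two] <;> norm_num
  have hmul' : ∀ m, Pov m * (Λ - p m • τ m) = 0 := by
    intro m
    rw [hΛ]
    fin_cases m <;>
      · ext i j
        fin_cases i <;> fin_cases j <;>
          simp [τ, p, Pov, Matrix.mul_apply, Matrix.sub_apply, Fin.sum_univ_two] <;> norm_num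
  have hgap : ∀ m, (Λ - p m • τ m).PosSemidef := by
    intro m
    rw [hΛ]
    fin_cases m
    · refine psd2 0 0 (2/15) ?_ ?_ ?_ ?_ (by norm_num) (by norm_num) (by norm_num) <;>
        norm_num [τ, p, Matrix.sub_apply]
    · refine psd2 (3/10) (-(1/10)) (1/30) ?_ ?_ ?_ ?_ (by norm_num) (by norm_num) (by norm_num) <;>
        norm_num [τ, p, Matrix.sub_apply]
    · refine psd2 (3/10) (1/10) (1/30) ?_ ?_ ?_ ?_ (by norm_num) (by norm_num) (by norm_num) <;>
        norm_num [τ, p, Matrix.sub_apply]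
    · refine psd2 (3/10) 0 (1/30) ?_ ?_ ?_ ?_ (by norm_num) (by norm_num) (by norm_num) <;>
        norm_num [τ, p, Matrix.sub_apply]
  refine ⟨hpsd, hsum, herr, hherm, hmul, hmul', hgap, ?_, ?_⟩
  · exact ⟨Pov, hpsd, hsum, herr.symm⟩
  · rintro e ⟨Q, hQ, hQsum, rfl⟩
    have hTr : Λ.trace = 8/15 := by
      rw [hΛ]; simp [Matrix.trace_fin_two]; norm_num
    have hterm : ∀ m, ((Λ - p m • τ m) * Q m).trace
        = (Λ * Q m).trace - p m * (τ m * Q m).trace := by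
      intro m
      rw [Matrix.sub_mul, Matrix.trace_sub, Matrix.smul_mul, Matrix.trace_smul, smul_eq_mul]
    have hsplit : ∑ m, ((Λ - p m • τ m) * Q m).trace
        = 8/15 - ∑ m, p m * (τ m * Q m).trace := by
      simp only [hterm, Finset.sum_sub_distrib]
      rw [← Matrix.trace_sum, ← Matrix.mul_sum, hQsum, Matrix.mul_one, hTr]
    have hT : 0 ≤ ∑ m, ((Λ - p m • τ m) * Q m).trace :=
      Finset.sum_nonneg fun m _ => trace_mul_nonneg (hgap m) (hQ m)
    rw [hsplit] at hT
    -- hT : 0 ≤ 8/15 - S ; goal : 7/15 ≤ 1 - S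
    have := add_le_add_right hT (7/15 : ℂ)
    calc (7/15 : ℂ) = 7/15 + 0 := by ring
    _ ≤ 7/15 + (8/15 - ∑ m, p m * (τ m * Q m).trace) := this
    _ = 1 - ∑ m, p m * (τ m * Q m).trace := by ring
end

section
/- Let W = block-diag((1−ε)|φ⟩⟨φ|, ε) ∈ ℂ^{5×5} with |φ⟩ ∈ ℂ⁴ a unit vector and 0 < ε < 1, and μ₀ = (1/(4−3ε))·block-diag((1−ε)I₄, ε). Then F(t) := tr(W · {W − t μ₀ ≥ 0}) = 1 for t ≤ 4 − 3ε and F(t) = 0 for t > 4 − 3ε, independently of |φ⟩. -/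
open ComplexOrder Matrix

lemma trace_mul_vecMulVec {n : Type*} [Fintype n] (M : Matrix n n ℂ) (a b : n → ℂ) :
    (M * Matrix.vecMulVec a b).trace = b ⬝ᵥ (M *ᵥ a) := by
  simp only [Matrix.trace, Matrix.diag, Matrix.mul_apply, Matrix.vecMulVec_apply,
    dotProduct, Matrix.mulVec, Finset.mul_sum]
  exact Finset.sum_congr rfl fun j _ => Finset.sum_congr rfl fun k _ => by ring

lemma sum_vecMulVec {m : Type*} [Fintype m] [DecidableEq m] {A : Matrix m m ℂ}
    (hA : A.IsHermitian) :
    ∑ i, Matrix.vecMulVec (fun j => hA.eigenvectorBasis i j)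
      (star fun j => hA.eigenvectorBasis i j) = 1 := by
  have h : (hA.eigenvectorUnitary : Matrix m m ℂ) * star (hA.eigenvectorUnitary : Matrix m m ℂ)
      = 1 := (Unitary.mem_iff.mp hA.eigenvectorUnitary.2).2
  ext j k
  have h2 := congrFun (congrFun h j) k
  simp only [Matrix.mul_apply, Matrix.star_apply, RCLike.star_def] at h2
  simp only [Matrix.sum_apply, Matrix.vecMulVec_apply, Pi.star_apply, RCLike.star_def]
  exact h2

lemma eig_struct (ε t : ℝ) (hε0 : 0 < ε) (hε1 : ε < 1)
    (φ : Fin 4 → ℂ) (hφ : ∑ i, φ i * star (φ i) = 1)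
    (v : Fin 4 ⊕ Fin 1 → ℂ) (lam : ℝ)
    (hv : (Matrix.fromBlocks ((1 - (ε:ℂ)) • Matrix.vecMulVec φ (star φ)) 0 0
        ((ε:ℂ) • (1 : Matrix (Fin 1) (Fin 1) ℂ))
      - (t:ℂ) • ((1 / (4 - 3 * (ε:ℂ))) • Matrix.fromBlocks
        ((1 - (ε:ℂ)) • (1 : Matrix (Fin 4) (Fin 4) ℂ)) 0 0
        ((ε:ℂ) • (1 : Matrix (Fin 1) (Fin 1) ℂ)))) *ᵥ v = (lam:ℂ) • v) :
    (t ≤ 4 - 3*ε → lam < 0 →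
      (Matrix.fromBlocks ((1 - (ε:ℂ)) • Matrix.vecMulVec φ (star φ)) 0 0
        ((ε:ℂ) • (1 : Matrix (Fin 1) (Fin 1) ℂ))) *ᵥ v = 0)
    ∧ (4 - 3*ε < t → 0 ≤ lam → v = 0) := by
  have h43 : (0:ℝ) < 4 - 3*ε := by linarith
  have hφ4 : φ 0 * star (φ 0) + φ 1 * star (φ 1) + φ 2 * star (φ 2) + φ 3 * star (φ 3) = 1 := by
    simpa [Fin.sum_univ_four] using hφ
  -- component equation at Sum.inr 0
  have hy : (((ε*(1 - t/(4-3*ε)) - lam : ℝ)):ℂ) * v (Sum.inr 0) = 0 := by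
    have h := congrFun hv (Sum.inr 0)
    simp only [Matrix.mulVec, dotProduct, Fintype.sum_sum_type, Matrix.sub_apply,
      Matrix.smul_apply, Matrix.fromBlocks_apply₂₁, Matrix.fromBlocks_apply₂₂,
      Matrix.one_apply, Fin.sum_univ_one, Fin.sum_univ_four, Matrix.zero_apply,
      Pi.smul_apply, smul_eq_mul, Pi.star_apply, if_true, eq_self_iff_true,
      mul_zero, zero_mul, sub_zero, zero_sub, zero_add, mul_one] at h
    push_cast
    have hq : (4 - 3*(ε:ℂ)) ≠ 0 := by
      have : ((4 - 3*ε : ℝ):ℂ) ≠ 0 := Complex.ofReal_ne_zero.mpr h43.ne'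
      push_cast at this; exact this
    field_simp at h ⊢
    linear_combination h
  -- component equations at Sum.inl j
  have hx : ∀ j : Fin 4, (1-(ε:ℂ)) * φ j *
        (star (φ 0) * v (Sum.inl 0) + star (φ 1) * v (Sum.inl 1)
          + star (φ 2) * v (Sum.inl 2) + star (φ 3) * v (Sum.inl 3))
      - (t:ℂ) * (1/(4-3*(ε:ℂ))) * ((1-(ε:ℂ)) * v (Sum.inl j)) = (lam:ℂ) * v (Sum.inl j) := by
    intro j
    have h := congrFun hv (Sum.inl j)
    simp only [Matrix.mulVec, dotProduct, Fintype.sum_sum_type, Matrix.sub_apply,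
      Matrix.smul_apply, Matrix.fromBlocks_apply₁₁, Matrix.fromBlocks_apply₁₂,
      Matrix.one_apply, Fin.sum_univ_one, Fin.sum_univ_four, Matrix.zero_apply,
      Matrix.vecMulVec_apply, Pi.smul_apply, smul_eq_mul, Pi.star_apply,
      mul_zero, zero_mul, sub_zero, zero_add, add_zero, mul_one] at h
    fin_cases j <;>
      · simp (config := { decide := true }) only [Fin.ext_iff, Fin.isValue, Fin.reduceFinMk,
          if_true, if_false] at h ⊢
        norm_num [RCLike.star_def] at h ⊢
        linear_combination h
  have hs : (((1-ε)*(1 - t/(4-3*ε)) - lam : ℝ):ℂ) *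
      (star (φ 0) * v (Sum.inl 0) + star (φ 1) * v (Sum.inl 1)
        + star (φ 2) * v (Sum.inl 2) + star (φ 3) * v (Sum.inl 3)) = 0 := by
    push_cast
    linear_combination star (φ 0) * hx 0 + star (φ 1) * hx 1 + star (φ 2) * hx 2
      + star (φ 3) * hx 3 - (1-(ε:ℂ)) *
      (star (φ 0) * v (Sum.inl 0) + star (φ 1) * v (Sum.inl 1)
        + star (φ 2) * v (Sum.inl 2) + star (φ 3) * v (Sum.inl 3)) * hφ4
  refine ⟨fun ht hlam => ?_, fun ht hlam => ?_⟩
  · have hc : t/(4-3*ε) ≤ 1 := (div_le_one h43).mpr ht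
    have hS0 : star (φ 0) * v (Sum.inl 0) + star (φ 1) * v (Sum.inl 1)
        + star (φ 2) * v (Sum.inl 2) + star (φ 3) * v (Sum.inl 3) = 0 := by
      have hne : ((1-ε)*(1 - t/(4-3*ε)) - lam : ℝ) ≠ 0 := by
        have : (0:ℝ) < (1-ε)*(1 - t/(4-3*ε)) - lam := by
          nlinarith [mul_nonneg (by linarith : (0:ℝ) ≤ 1-ε)
            (by linarith : (0:ℝ) ≤ 1 - t/(4-3*ε))]
        exact this.ne'
      exact (mul_eq_zero.mp hs).resolve_left (Complex.ofReal_ne_zero.mpr hne)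
    have hy0 : v (Sum.inr 0) = 0 := by
      have hne : (ε*(1 - t/(4-3*ε)) - lam : ℝ) ≠ 0 := by
        have : (0:ℝ) < ε*(1 - t/(4-3*ε)) - lam := by
          nlinarith [mul_nonneg hε0.le (by linarith : (0:ℝ) ≤ 1 - t/(4-3*ε))]
        exact this.ne'
      exact (mul_eq_zero.mp hy).resolve_left (Complex.ofReal_ne_zero.mpr hne)
    funext k
    rcases k with j | j
    · simp only [Matrix.mulVec, dotProduct, Fintype.sum_sum_type,
        Matrix.fromBlocks_apply₁₁, Matrix.fromBlocks_apply₁₂, Matrix.smul_apply,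
        Matrix.vecMulVec_apply, Matrix.zero_apply, Fin.sum_univ_one, Fin.sum_univ_four,
        Pi.star_apply, smul_eq_mul, mul_zero, zero_mul, add_zero, Pi.zero_apply]
      linear_combination (1-(ε:ℂ)) * φ j * hS0
    · fin_cases j
      simp only [Matrix.mulVec, dotProduct, Fintype.sum_sum_type,
        Matrix.fromBlocks_apply₂₁, Matrix.fromBlocks_apply₂₂, Matrix.smul_apply,
        Matrix.one_apply, Matrix.zero_apply, Fin.sum_univ_one, Fin.sum_univ_four,
        smul_eq_mul, mul_zero, zero_mul, zero_add, Pi.zero_apply, if_true, mul_one, hy0,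
        Finset.sum_const_zero]
  · have hc : 1 < t/(4-3*ε) := (one_lt_div h43).mpr ht
    have hS0 : star (φ 0) * v (Sum.inl 0) + star (φ 1) * v (Sum.inl 1)
        + star (φ 2) * v (Sum.inl 2) + star (φ 3) * v (Sum.inl 3) = 0 := by
      have hne : ((1-ε)*(1 - t/(4-3*ε)) - lam : ℝ) ≠ 0 := by
        have : (1-ε)*(1 - t/(4-3*ε)) - lam < 0 := by
          nlinarith [mul_pos (by linarith : (0:ℝ) < 1-ε)
            (by linarith : (0:ℝ) < t/(4-3*ε) - 1)]
        exact this.ne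
      exact (mul_eq_zero.mp hs).resolve_left (Complex.ofReal_ne_zero.mpr hne)
    have hy0 : v (Sum.inr 0) = 0 := by
      have hne : (ε*(1 - t/(4-3*ε)) - lam : ℝ) ≠ 0 := by
        have : ε*(1 - t/(4-3*ε)) - lam < 0 := by
          nlinarith [mul_pos hε0 (by linarith : (0:ℝ) < t/(4-3*ε) - 1)]
        exact this.ne
      exact (mul_eq_zero.mp hy).resolve_left (Complex.ofReal_ne_zero.mpr hne)
    have hx0 : ∀ j : Fin 4, v (Sum.inl j) = 0 := by
      intro j
      have hcoef : (lam + (1-ε)*(t/(4-3*ε)) : ℝ) ≠ 0 := by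
        have : (0:ℝ) < lam + (1-ε)*(t/(4-3*ε)) := by
          nlinarith [mul_pos (by linarith : (0:ℝ) < 1-ε)
            (by linarith : (0:ℝ) < t/(4-3*ε))]
        exact this.ne'
      have h2 : ((lam + (1-ε)*(t/(4-3*ε)) : ℝ):ℂ) * v (Sum.inl j) = 0 := by
        push_cast
        linear_combination -hx j + (1-(ε:ℂ)) * φ j * hS0
      exact (mul_eq_zero.mp h2).resolve_left (Complex.ofReal_ne_zero.mpr hcoef)
    funext k
    rcases k with j | j
    · exact hx0 j
    · fin_cases j; exact hy0

/-- Symmetry of the 2-qubit erasure channel: for `W = diag((1−ε)|φ⟩⟨φ|, ε)` and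
`μ₀ = (1/(4−3ε)) diag((1−ε)I₄, ε)`, `F(t) = tr(W {W − tμ₀ ≥ 0})` equals `1` for
`t ≤ 4 − 3ε` and `0` for `t > 4 − 3ε`, independently of `φ`. -/
theorem erasure_symmetric
    (ε : ℝ) (hε0 : 0 < ε) (hε1 : ε < 1)
    (φ : Fin 4 → ℂ) (hφ : ∑ i, φ i * star (φ i) = 1)
    (W μ₀ : Matrix (Fin 4 ⊕ Fin 1) (Fin 4 ⊕ Fin 1) ℂ)
    (hWdef : W = Matrix.fromBlocks
      ((1 - (ε : ℂ)) • Matrix.vecMulVec φ (star φ)) 0 0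
      ((ε : ℂ) • (1 : Matrix (Fin 1) (Fin 1) ℂ)))
    (hμ₀def : μ₀ = (1 / (4 - 3 * (ε : ℂ))) • Matrix.fromBlocks
      ((1 - (ε : ℂ)) • (1 : Matrix (Fin 4) (Fin 4) ℂ)) 0 0
      ((ε : ℂ) • (1 : Matrix (Fin 1) (Fin 1) ℂ)))
    (hH : ∀ t : ℝ, (W - (t : ℂ) • μ₀).IsHermitian) :
    (∀ t : ℝ, t ≤ 4 - 3 * ε →
      (W * projNonneg (W - (t : ℂ) • μ₀) (hH t)).trace = 1) ∧
    (∀ t : ℝ, 4 - 3 * ε < t →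
      (W * projNonneg (W - (t : ℂ) • μ₀) (hH t)).trace = 0) := by
  subst hWdef; subst hμ₀def
  have hv : ∀ (t : ℝ) (i : Fin 4 ⊕ Fin 1),
      (Matrix.fromBlocks ((1 - (ε:ℂ)) • Matrix.vecMulVec φ (star φ)) 0 0
        ((ε:ℂ) • (1 : Matrix (Fin 1) (Fin 1) ℂ))
      - (t:ℂ) • ((1 / (4 - 3 * (ε:ℂ))) • Matrix.fromBlocks
        ((1 - (ε:ℂ)) • (1 : Matrix (Fin 4) (Fin 4) ℂ)) 0 0
        ((ε:ℂ) • (1 : Matrix (Fin 1) (Fin 1) ℂ)))) *ᵥ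
        (fun j => (hH t).eigenvectorBasis i j)
      = (((hH t).eigenvalues i : ℝ):ℂ) • (fun j => (hH t).eigenvectorBasis i j) := by
    intro t i
    have h := (hH t).mulVec_eigenvectorBasis i
    funext j
    have h2 := congrFun h j
    simpa [Pi.smul_apply, Complex.real_smul, smul_eq_mul] using h2
  have key := fun (t : ℝ) (i : Fin 4 ⊕ Fin 1) =>
    eig_struct ε t hε0 hε1 φ hφ (fun j => (hH t).eigenvectorBasis i j)
      ((hH t).eigenvalues i) (hv t i)
  constructor
  · intro t ht
    unfold projNonneg
    rw [Matrix.mul_sum, Matrix.trace_sum]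
    have h1 : ∀ i : Fin 4 ⊕ Fin 1,
        ((Matrix.fromBlocks ((1 - (ε:ℂ)) • Matrix.vecMulVec φ (star φ)) 0 0
            ((ε:ℂ) • (1 : Matrix (Fin 1) (Fin 1) ℂ))) *
          (if 0 ≤ (hH t).eigenvalues i then
            Matrix.vecMulVec (fun j => (hH t).eigenvectorBasis i j)
              (star fun j => (hH t).eigenvectorBasis i j) else 0)).trace
        = ((Matrix.fromBlocks ((1 - (ε:ℂ)) • Matrix.vecMulVec φ (star φ)) 0 0
            ((ε:ℂ) • (1 : Matrix (Fin 1) (Fin 1) ℂ))) *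
            Matrix.vecMulVec (fun j => (hH t).eigenvectorBasis i j)
              (star fun j => (hH t).eigenvectorBasis i j)).trace := by
      intro i
      by_cases hpos : 0 ≤ (hH t).eigenvalues i
      · rw [if_pos hpos]
      · rw [if_neg hpos, Matrix.mul_zero, Matrix.trace_zero, trace_mul_vecMulVec,
          (key t i).1 ht (not_le.mp hpos), dotProduct_zero]
    rw [Finset.sum_congr rfl (fun i _ => h1 i), ← Matrix.trace_sum, ← Matrix.mul_sum,
      sum_vecMulVec, Matrix.mul_one]
    simp only [Matrix.trace, Matrix.diag, Fintype.sum_sum_type,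
      Matrix.fromBlocks_apply₁₁, Matrix.fromBlocks_apply₂₂, Matrix.smul_apply,
      Matrix.vecMulVec_apply, Matrix.one_apply_eq, Fin.sum_univ_one, smul_eq_mul,
      Pi.star_apply, mul_one]
    rw [← Finset.mul_sum, hφ]
    ring
  · intro t ht
    unfold projNonneg
    rw [Matrix.mul_sum, Matrix.trace_sum]
    have h1 : ∀ i : Fin 4 ⊕ Fin 1,
        ((Matrix.fromBlocks ((1 - (ε:ℂ)) • Matrix.vecMulVec φ (star φ)) 0 0
            ((ε:ℂ) • (1 : Matrix (Fin 1) (Fin 1) ℂ))) *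
          (if 0 ≤ (hH t).eigenvalues i then
            Matrix.vecMulVec (fun j => (hH t).eigenvectorBasis i j)
              (star fun j => (hH t).eigenvectorBasis i j) else 0)).trace = 0 := by
      intro i
      have hneg : ¬ 0 ≤ (hH t).eigenvalues i := by
        intro hge
        have h0 := (key t i).2 ht hge
        exact (hH t).eigenvectorBasis.orthonormal.ne_zero i
          (by ext j; exact congrFun h0 j)
      rw [if_neg hneg, Matrix.mul_zero, Matrix.trace_zero]
    rw [Finset.sum_congr rfl (fun i _ => h1 i)]
    simp
end

section
/- Define the N-qubit Bell code of cardinality M = 2^{N−1}K (K ≥ 2): for k = 0,…,K−1 and l = 0,…,2^{N−2}−1, |φ_{1+2k+2Kl}⟩ = ((|00⟩+e^{2πik/K}|11⟩)/√2)⊗|l⟩ and |φ_{2+2k+2Kl}⟩ = ((|01⟩+e^{2πik/K}|10⟩)/√2)⊗|l⟩ where |l⟩ ranges over the computational basis of ℂ^{2^{N−2}}. Then Σ_{m=1}^{M} |φ_m⟩⟨φ_m| = (M/2^N)·I_{2^N}, and the minimum error probability of discriminating the equiprobable pure states |φ_m⟩⟨φ_m| equals 1 − 2^N/M. -/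
open ComplexOrder Matrix Finset

namespace BellAux

variable {n : Type*} [Fintype n] [DecidableEq n]

lemma trace_vecMulVec (v w : n → ℂ) : (vecMulVec v w).trace = v ⬝ᵥ w := by
  simp [Matrix.trace, Matrix.diag, vecMulVec_apply, dotProduct]

lemma trace_vecMulVec_mul (v w : n → ℂ) (Q : Matrix n n ℂ) :
    (vecMulVec v w * Q).trace = w ⬝ᵥ (Q *ᵥ v) := by
  simp only [Matrix.trace, Matrix.diag, Matrix.mul_apply, vecMulVec_apply, dotProduct,
    Matrix.mulVec, Finset.mul_sum]
  rw [Finset.sum_comm]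
  exact Finset.sum_congr rfl fun j _ => Finset.sum_congr rfl fun i _ => by ring

lemma vecMulVec_mul_vecMulVec (a b c d : n → ℂ) :
    vecMulVec a b * vecMulVec c d = (b ⬝ᵥ c) • vecMulVec a d := by
  ext i j
  simp only [Matrix.mul_apply, vecMulVec_apply, Matrix.smul_apply, dotProduct, smul_eq_mul,
    Finset.sum_mul]
  exact Finset.sum_congr rfl fun k _ => by ring

lemma posSemidef_vecMulVec (v : n → ℂ) : (vecMulVec v (star v)).PosSemidef := by
  refine Matrix.PosSemidef.of_dotProduct_mulVec_nonneg ?_ ?_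
  · ext i j
    simp [vecMulVec_apply, Matrix.conjTranspose_apply, mul_comm]
  · intro x
    have h1 : ∀ i, (vecMulVec v (star v) *ᵥ x) i = v i * (star v ⬝ᵥ x) := by
      intro i
      simp only [Matrix.mulVec, vecMulVec_apply, dotProduct, Finset.mul_sum]
      exact Finset.sum_congr rfl fun j _ => by simp [Pi.star_apply]; ring
    have h2 : star x ⬝ᵥ (vecMulVec v (star v) *ᵥ x) = star (star v ⬝ᵥ x) * (star v ⬝ᵥ x) := by
      simp only [dotProduct, h1, star_sum, star_mul', Pi.star_apply, star_star, Finset.sum_mul]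
      exact Finset.sum_congr rfl fun i _ => by ring
    rw [h2]
    exact star_mul_self_nonneg _

lemma trace_mul_psd_nonneg {P Q : Matrix n n ℂ} (hP : P.PosSemidef) (hQ : Q.PosSemidef) :
    0 ≤ (P * Q).trace := by
  obtain ⟨B, hB⟩ : ∃ B : Matrix n n ℂ, Q = Bᴴ * B := by
    open scoped MatrixOrder in
    obtain ⟨B, hB⟩ := CStarAlgebra.nonneg_iff_eq_star_mul_self.mp hQ.nonneg
    exact ⟨B, hB⟩
  rw [hB, ← Matrix.mul_assoc, Matrix.trace_mul_cycle]
  have key : ∀ i, (B * P * Bᴴ) i i = star (star (B i)) ⬝ᵥ (P *ᵥ star (B i)) := by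
    intro i
    simp only [Matrix.mul_apply, Matrix.conjTranspose_apply, dotProduct, Matrix.mulVec,
      star_star, Pi.star_apply, Finset.mul_sum, Finset.sum_mul]
    rw [Finset.sum_comm]
    exact Finset.sum_congr rfl fun j _ => Finset.sum_congr rfl fun k _ => by ring
  rw [Matrix.trace]
  apply Finset.sum_nonneg
  intro i _
  rw [Matrix.diag, key i]
  exact hP.dotProduct_mulVec_nonneg _

lemma posSemidef_smul_complex {A : Matrix n n ℂ} (hA : A.PosSemidef) {c : ℂ} (hc : 0 ≤ c) :
    (c • A).PosSemidef := by
  have hcs : star c = c := by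
    rw [Complex.star_def, Complex.conj_eq_iff_im]
    exact ((Complex.le_def.mp hc).2).symm
  refine Matrix.PosSemidef.of_dotProduct_mulVec_nonneg ?_ ?_
  · ext i j
    simp [Matrix.conjTranspose_apply, hA.1.apply, hcs]
  · intro x
    rw [smul_mulVec, dotProduct_smul, smul_eq_mul]
    exact mul_nonneg hc (hA.dotProduct_mulVec_nonneg x)

end BellAux

namespace BellAux

lemma omega_mul_conj (k K : ℕ) :
    Complex.exp (2 * Real.pi * Complex.I * k / K) *
      (starRingEnd ℂ) (Complex.exp (2 * Real.pi * Complex.I * k / K)) = 1 := by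
  rw [← Complex.exp_conj, ← Complex.exp_add]
  have : (starRingEnd ℂ) (2 * Real.pi * Complex.I * k / K) =
      -(2 * Real.pi * Complex.I * k / K) := by
    simp [map_div₀, Complex.conj_I, map_ofNat]
    ring
  rw [this, add_neg_cancel, Complex.exp_zero]

lemma sum_omega (K : ℕ) (hK : 2 ≤ K) :
    ∑ k : Fin K, Complex.exp (2 * Real.pi * Complex.I * k / K) = 0 := by
  have hKne : (K : ℂ) ≠ 0 := by
    have : K ≠ 0 := by omega
    exact_mod_cast this
  set ζ : ℂ := Complex.exp (2 * Real.pi * Complex.I / K) with hζdef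
  have hpow : ∀ k : ℕ, Complex.exp (2 * Real.pi * Complex.I * k / K) = ζ ^ k := by
    intro k
    rw [hζdef, ← Complex.exp_nat_mul]
    ring_nf
  have hζK : ζ ^ K = 1 := by
    rw [hζdef, ← Complex.exp_nat_mul]
    rw [show (K : ℂ) * (2 * Real.pi * Complex.I / K) = 2 * Real.pi * Complex.I by
      field_simp]
    exact Complex.exp_two_pi_mul_I
  have h2πI : (2 * (Real.pi : ℂ) * Complex.I) ≠ 0 := by
    simp [Real.pi_ne_zero, Complex.I_ne_zero]
  have hζne : ζ ≠ 1 := by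
    intro h
    rw [hζdef, Complex.exp_eq_one_iff] at h
    obtain ⟨m, hm⟩ := h
    have h2 : ((m : ℂ) * K) * (2 * Real.pi * Complex.I) = 1 * (2 * Real.pi * Complex.I) := by
      have : ((m : ℂ) * K) * (2 * Real.pi * Complex.I) = ((m : ℂ) * (2 * Real.pi * Complex.I)) * K := by
        ring
      rw [this, ← hm]
      field_simp
    have hmK : (m : ℂ) * K = 1 := mul_right_cancel₀ h2πI h2
    have hmKZ : m * (K : ℤ) = 1 := by exact_mod_cast hmK
    have hdvd : (K : ℤ) ∣ 1 := ⟨m, by linarith⟩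
    have := Int.le_of_dvd one_pos hdvd
    omega
  calc ∑ k : Fin K, Complex.exp (2 * Real.pi * Complex.I * k / K)
      = ∑ k : Fin K, ζ ^ (k : ℕ) := Finset.sum_congr rfl fun k _ => hpow k
    _ = ∑ k ∈ Finset.range K, ζ ^ k := Fin.sum_univ_eq_sum_range (fun k => ζ ^ k) K
    _ = (ζ ^ K - 1) / (ζ - 1) := geom_sum_eq hζne K
    _ = 0 := by rw [hζK]; simp

lemma sum_omega_conj (K : ℕ) (hK : 2 ≤ K) :
    ∑ k : Fin K, (starRingEnd ℂ) (Complex.exp (2 * Real.pi * Complex.I * k / K)) = 0 := by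
  rw [← map_sum, sum_omega K hK, map_zero]

end BellAux

namespace BellAux


def enc (K L : ℕ) (x : Fin 2 × Fin K × Fin L) : Fin (2 * K * L) :=
  ⟨x.1.val + 2 * x.2.1.val + 2 * K * x.2.2.val, by
    obtain ⟨p, k, l⟩ := x
    have hp := p.isLt; have hk := k.isLt; have hl := l.isLt
    have h1 : p.val + 2 * k.val + 1 ≤ 2 * K := by omega
    have h2 : 2 * K * l.val + 2 * K ≤ 2 * K * L := by
      have h3 : l.val + 1 ≤ L := hl
      calc 2 * K * l.val + 2 * K = 2 * K * (l.val + 1) := by ring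
        _ ≤ 2 * K * L := Nat.mul_le_mul_left _ h3
    linarith⟩

variable {K L : ℕ}

lemma enc_val (x : Fin 2 × Fin K × Fin L) :
    (enc K L x : ℕ) = x.1.val + 2 * x.2.1.val + 2 * K * x.2.2.val := rfl

lemma enc_mod_two (x : Fin 2 × Fin K × Fin L) : (enc K L x : ℕ) % 2 = x.1.val := by
  obtain ⟨p, k, l⟩ := x
  dsimp only
  have hp := p.isLt
  rw [enc_val, show p.val + 2 * k.val + 2 * K * l.val = p.val + 2 * (k.val + K * l.val) by ring,
    Nat.add_mul_mod_self_left]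
  omega

lemma enc_mod (x : Fin 2 × Fin K × Fin L) : (enc K L x : ℕ) % (2 * K) = x.1.val + 2 * x.2.1.val := by
  obtain ⟨p, k, l⟩ := x
  have hp := p.isLt; have hk := k.isLt
  rw [enc_val, show p.val + 2 * k.val + 2 * K * l.val = (p.val + 2 * k.val) + (2 * K) * l.val by ring,
    Nat.add_mul_mod_self_left]
  exact Nat.mod_eq_of_lt (by omega)

lemma enc_mod_div (x : Fin 2 × Fin K × Fin L) : ((enc K L x : ℕ) % (2 * K)) / 2 = x.2.1.val := by
  rw [enc_mod]
  omega

lemma enc_div (hK : 0 < K) (x : Fin 2 × Fin K × Fin L) :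
    (enc K L x : ℕ) / (2 * K) = x.2.2.val := by
  obtain ⟨p, k, l⟩ := x
  dsimp only
  have hp := p.isLt; have hk := k.isLt
  rw [enc_val, show p.val + 2 * k.val + 2 * K * l.val = (p.val + 2 * k.val) + (2 * K) * l.val by ring,
    Nat.add_mul_div_left _ _ (by omega : 0 < 2 * K), Nat.div_eq_of_lt (by omega)]
  omega

lemma enc_bijective (hK : 0 < K) : Function.Bijective (enc K L) := by
  rw [Fintype.bijective_iff_injective_and_card]
  constructor
  · intro x y h
    have hv : (enc K L x : ℕ) = (enc K L y : ℕ) := congrArg Fin.val h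
    have h1 : x.1 = y.1 := Fin.ext (by rw [← enc_mod_two x, ← enc_mod_two y, hv])
    have h2 : x.2.1 = y.2.1 := Fin.ext (by rw [← enc_mod_div x, ← enc_mod_div y, hv])
    have h3 : x.2.2 = y.2.2 := Fin.ext (by rw [← enc_div hK x, ← enc_div hK y, hv])
    exact Prod.ext h1 (Prod.ext h2 h3)
  · simp [mul_assoc]


end BellAux




/-- The `N`-qubit generalized Bell vectors in `ℂ⁴ ⊗ ℂ^L` (`L = 2^{N−2}`), of
cardinality `M = 2KL`: the vector with index `2k + 2Kl` is
`((|00⟩ + e^{2πik/K}|11⟩)/√2) ⊗ |l⟩` and the one with index `1 + 2k + 2Kl` is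
`((|01⟩ + e^{2πik/K}|10⟩)/√2) ⊗ |l⟩`. -/
noncomputable def bellN (K L : ℕ) (m : Fin (2 * K * L)) : Fin 4 × Fin L → ℂ :=
  fun q =>
    let l : ℕ := m.val / (2 * K)
    let k : ℕ := (m.val % (2 * K)) / 2
    let ω : ℂ := Complex.exp (2 * Real.pi * Complex.I * k / K)
    (if q.2.val = l then 1 else 0) *
    (if m.val % 2 = 0 then
        ![1 / (Real.sqrt 2 : ℂ), 0, 0, ω / (Real.sqrt 2 : ℂ)] q.1
      else
        ![0, 1 / (Real.sqrt 2 : ℂ), ω / (Real.sqrt 2 : ℂ), 0] q.1)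


namespace BellAux


lemma sqrt2_sq : ((Real.sqrt 2 : ℝ) : ℂ) * ((Real.sqrt 2 : ℝ) : ℂ) = 2 := by
  rw [← Complex.ofReal_mul, Real.mul_self_sqrt (by norm_num)]
  norm_num

variable {K L : ℕ}

lemma bellN_norm (m : Fin (2 * K * L)) :
    star (bellN K L m) ⬝ᵥ bellN K L m = 1 := by
  have hl : m.val / (2 * K) < L :=
    Nat.div_lt_of_lt_mul (by have := m.isLt; omega)
  have hcond : ∀ l : Fin L, (l.val = m.val / (2 * K)) ↔ (l = ⟨m.val / (2 * K), hl⟩) :=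
    fun l => by rw [Fin.ext_iff]
  simp only [dotProduct, bellN, Pi.star_apply, star_mul']
  rw [Fintype.sum_prod_type]
  by_cases hm : (m : ℕ) % 2 = 0 <;>
    simp only [hm, if_true, if_false, reduceIte, apply_ite (star : ℂ → ℂ), star_one, star_zero,
      hcond, mul_ite, ite_mul, one_mul, zero_mul, mul_one, mul_zero] <;>
    simp only [Finset.sum_ite_eq', Finset.mem_univ, if_true] <;>
    rw [Fin.sum_univ_four] <;>
    simp only [Matrix.cons_val_zero, Matrix.cons_val_one, Matrix.head_cons, Matrix.cons_val_two,
      Matrix.tail_cons, Matrix.cons_val_three, star_zero, mul_zero, zero_mul, add_zero, zero_add] <;>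
    simp only [Complex.star_def, map_div₀, _root_.map_one, Complex.conj_ofReal] <;>
    rw [div_mul_div_comm, div_mul_div_comm, sqrt2_sq,
      mul_comm ((starRingEnd ℂ) (Complex.exp _)) (Complex.exp _), omega_mul_conj] <;>
    norm_num



lemma bellN_enc (hK : 0 < K) (x : Fin 2 × Fin K × Fin L) (q : Fin 4 × Fin L) :
    bellN K L (enc K L x) q =
      (if q.2.val = x.2.2.val then 1 else 0) *
      (if x.1.val = 0 then
          ![1 / (Real.sqrt 2 : ℂ), 0, 0,
            Complex.exp (2 * Real.pi * Complex.I * x.2.1.val / K) / (Real.sqrt 2 : ℂ)] q.1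
        else
          ![0, 1 / (Real.sqrt 2 : ℂ),
            Complex.exp (2 * Real.pi * Complex.I * x.2.1.val / K) / (Real.sqrt 2 : ℂ), 0] q.1) := by
  have h2 : (enc K L x : ℕ) % 2 = x.1.val := enc_mod_two x
  have hd : (enc K L x : ℕ) / (2 * K) = x.2.2.val := enc_div hK x
  have hmd : ((enc K L x : ℕ) % (2 * K)) / 2 = x.2.1.val := enc_mod_div x
  simp only [bellN, h2, hd, hmd]

lemma hconst : (1 / (Real.sqrt 2 : ℂ)) * star (1 / (Real.sqrt 2 : ℂ)) = 1 / 2 := by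
  simp only [Complex.star_def, map_div₀, _root_.map_one, Complex.conj_ofReal]
  rw [div_mul_div_comm, sqrt2_sq, one_mul]

lemma hdiag (k K : ℕ) :
    (Complex.exp (2 * Real.pi * Complex.I * k / K) / (Real.sqrt 2 : ℂ)) *
      star (Complex.exp (2 * Real.pi * Complex.I * k / K) / (Real.sqrt 2 : ℂ)) = 1 / 2 := by
  simp only [Complex.star_def, map_div₀, Complex.conj_ofReal]
  rw [div_mul_div_comm, sqrt2_sq, omega_mul_conj]

lemma hmix1 (k K : ℕ) :
    (1 / (Real.sqrt 2 : ℂ)) *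
      star (Complex.exp (2 * Real.pi * Complex.I * k / K) / (Real.sqrt 2 : ℂ)) =
      (starRingEnd ℂ) (Complex.exp (2 * Real.pi * Complex.I * k / K)) * (1 / 2) := by
  simp only [Complex.star_def, map_div₀, Complex.conj_ofReal]
  rw [div_mul_div_comm, sqrt2_sq, one_mul, mul_one_div]

lemma hmix2 (k K : ℕ) :
    (Complex.exp (2 * Real.pi * Complex.I * k / K) / (Real.sqrt 2 : ℂ)) *
      star (1 / (Real.sqrt 2 : ℂ)) =
      Complex.exp (2 * Real.pi * Complex.I * k / K) * (1 / 2) := by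
  simp only [Complex.star_def, map_div₀, _root_.map_one, Complex.conj_ofReal]
  rw [div_mul_div_comm, sqrt2_sq, mul_one, mul_one_div]

lemma bellN_sum (hK2 : 2 ≤ K) :
    ∑ m : Fin (2 * K * L), vecMulVec (bellN K L m) (star (bellN K L m)) =
      ((K : ℂ) / 2) • (1 : Matrix (Fin 4 × Fin L) (Fin 4 × Fin L) ℂ) := by
  have hK : 0 < K := by omega
  rw [← Fintype.sum_bijective (enc K L) (enc_bijective hK)
    (fun x => vecMulVec (bellN K L (enc K L x)) (star (bellN K L (enc K L x)))) _ (fun x => rfl)]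
  ext ⟨a, l₁⟩ ⟨b, l₂⟩
  rw [Matrix.sum_apply]
  simp only [vecMulVec_apply, Pi.star_apply, bellN_enc hK, Matrix.smul_apply, Matrix.one_apply,
    Prod.mk.injEq, smul_eq_mul]
  by_cases hll : l₁ = l₂
  · subst hll
    rw [Fintype.sum_prod_type, Fin.sum_univ_two]
    dsimp only
    simp only [Fin.val_zero, Fin.val_one, Fintype.sum_prod_type, one_ne_zero, if_true, if_false,
      reduceIte]
    simp only [star_mul', apply_ite (star : ℂ → ℂ), star_one, star_zero, Fin.val_eq_val,
      mul_ite, ite_mul, one_mul, zero_mul, mul_one, mul_zero]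
    simp only [Finset.sum_ite_eq, Finset.mem_univ, if_true]
    fin_cases a <;> fin_cases b <;>
      simp only [Matrix.cons_val_zero, Matrix.cons_val_one, Matrix.head_cons,
        Matrix.cons_val_two, Matrix.tail_cons, Matrix.cons_val_three, Matrix.head_fin_const,
        star_zero, mul_zero, zero_mul, add_zero, zero_add, Fin.mk_zero, Fin.mk_one,
        Fin.reduceFinMk, Finset.sum_const_zero, and_true, Fin.isValue]
    all_goals try simp only [hconst, hdiag, hmix1, hmix2, Finset.sum_const, Finset.card_univ,
      Fintype.card_fin, nsmul_eq_mul, if_true, reduceIte]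
    all_goals first
      | (rw [← Finset.sum_mul, sum_omega_conj K hK2]; simp)
      | (rw [← Finset.sum_mul, sum_omega K hK2]; simp)
      | ring1
      | simp
  · have hr : (if a = b ∧ l₁ = l₂ then (1:ℂ) else 0) = 0 := by simp [hll]
    rw [hr, mul_zero]
    apply Finset.sum_eq_zero
    intro x _
    by_cases h1 : (l₁ : ℕ) = (x.2.2 : ℕ)
    · have h2 : ¬((l₂ : ℕ) = (x.2.2 : ℕ)) := fun h2 => hll (Fin.ext (h1.trans h2.symm))
      simp [h1, h2]
    · simp [h1]

end BellAux


/-- The `N`-qubit Bell code of cardinality `M = 2^{N−1}K` resolves the identity,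
`Σ_m |φ_m⟩⟨φ_m| = (M/2^N) I`, and the minimum error probability of discriminating
the equiprobable pure states `|φ_m⟩⟨φ_m|` equals `1 − 2^N/M`. -/
theorem bellN_code_min_error (N K : ℕ) (hN : 2 ≤ N) (hK : 2 ≤ K)
    (W : Fin (2 * K * 2 ^ (N - 2)) →
      Matrix (Fin 4 × Fin (2 ^ (N - 2))) (Fin 4 × Fin (2 ^ (N - 2))) ℂ)
    (hWdef : ∀ m, W m = Matrix.vecMulVec (bellN K (2 ^ (N - 2)) m)
      (star (bellN K (2 ^ (N - 2)) m))) :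
    (∑ m, W m = (((2 * K * 2 ^ (N - 2) : ℕ) : ℂ) / ((2 ^ N : ℕ) : ℂ)) •
      (1 : Matrix (Fin 4 × Fin (2 ^ (N - 2))) (Fin 4 × Fin (2 ^ (N - 2))) ℂ)) ∧
    IsLeast {e : ℂ | ∃ Q : Fin (2 * K * 2 ^ (N - 2)) →
        Matrix (Fin 4 × Fin (2 ^ (N - 2))) (Fin 4 × Fin (2 ^ (N - 2))) ℂ,
        (∀ i, (Q i).PosSemidef) ∧ (∑ i, Q i = 1) ∧
        e = 1 - ∑ m, (1 / ((2 * K * 2 ^ (N - 2) : ℕ) : ℂ)) * (W m * Q m).trace}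
      (1 - ((2 ^ N : ℕ) : ℂ) / ((2 * K * 2 ^ (N - 2) : ℕ) : ℂ)) := by
  classical
  have hKpos : 0 < K := by omega
  have hLpos : 0 < (2 ^ (N - 2)) := pow_pos (by norm_num) _
  have h2N : (2 : ℕ) ^ N = 4 * (2 ^ (N - 2)) := by
    rw [show N = 2 + (N - 2) by omega, pow_add]
    norm_num
  have hKne : (K : ℂ) ≠ 0 := by exact_mod_cast Nat.pos_iff_ne_zero.mp hKpos
  have hLne : ((2 ^ (N - 2) : ℕ) : ℂ) ≠ 0 := by exact_mod_cast Nat.pos_iff_ne_zero.mp hLpos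
  have hMne : ((2 * K * (2 ^ (N - 2)) : ℕ) : ℂ) ≠ 0 := by
    push_cast
    simp [hKne, hLne]
  have hcoeff : (((2 * K * (2 ^ (N - 2)) : ℕ) : ℂ) / ((2 ^ N : ℕ) : ℂ)) = (K : ℂ) / 2 := by
    rw [h2N]
    push_cast
    field_simp
    ring
  have htarget : ((2 ^ N : ℕ) : ℂ) / ((2 * K * (2 ^ (N - 2)) : ℕ) : ℂ) = 2 / (K : ℂ) := by
    rw [h2N]
    push_cast
    field_simp
    ring
  -- the norm of each bell vector
  have hnorm : ∀ m : Fin (2 * K * (2 ^ (N - 2))), star (bellN K (2 ^ (N - 2)) m) ⬝ᵥ bellN K (2 ^ (N - 2)) m = 1 :=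
    fun m => BellAux.bellN_norm m
  have hWsq : ∀ m, W m * W m = W m := by
    intro m
    rw [hWdef m, BellAux.vecMulVec_mul_vecMulVec, hnorm m, one_smul]
  have hWtrace : ∀ m, (W m).trace = 1 := by
    intro m
    rw [hWdef m, BellAux.trace_vecMulVec, dotProduct_comm, hnorm m]
  have hWpsd : ∀ m, (W m).PosSemidef := by
    intro m
    rw [hWdef m]
    exact BellAux.posSemidef_vecMulVec _
  -- part 1
  have part1 : ∑ m, W m = (((2 * K * (2 ^ (N - 2)) : ℕ) : ℂ) / ((2 ^ N : ℕ) : ℂ)) •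
      (1 : Matrix (Fin 4 × Fin (2 ^ (N - 2))) (Fin 4 × Fin (2 ^ (N - 2))) ℂ) := by
    have h := BellAux.bellN_sum (K := K) (L := 2 ^ (N - 2)) hK
    calc ∑ m, W m = ∑ m : Fin (2 * K * (2 ^ (N - 2))),
          Matrix.vecMulVec (bellN K (2 ^ (N - 2)) m) (star (bellN K (2 ^ (N - 2)) m)) :=
        Finset.sum_congr rfl fun m _ => hWdef m
      _ = ((K : ℂ) / 2) • 1 := h
      _ = _ := by rw [hcoeff]
  refine ⟨part1, ?_, ?_⟩
  · -- membership: the square-root measurement POVM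
    refine ⟨fun m => (2 / (K : ℂ)) • W m, ?_, ?_, ?_⟩
    · intro i
      refine BellAux.posSemidef_smul_complex (hWpsd i) ?_
      have : (2 / (K : ℂ)) = ((2 / (K : ℝ) : ℝ) : ℂ) := by push_cast; ring
      rw [this]
      rw [Complex.zero_le_real]
      positivity
    · rw [← Finset.smul_sum, part1, hcoeff, smul_smul]
      rw [show (2 / (K : ℂ)) * ((K : ℂ) / 2) = 1 by field_simp]
      rw [one_smul]
    · have hterm : ∀ m : Fin (2 * K * (2 ^ (N - 2))),
          (W m * ((2 / (K : ℂ)) • W m)).trace = 2 / (K : ℂ) := by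
        intro m
        rw [mul_smul_comm, Matrix.trace_smul, hWsq m, hWtrace m, smul_eq_mul, mul_one]
      rw [Finset.sum_congr rfl fun m _ => by rw [hterm m]]
      rw [Finset.sum_const, Finset.card_univ, Fintype.card_fin, nsmul_eq_mul, htarget]
      congr 1
      field_simp
  · -- lower bound
    rintro e ⟨Q, hQpsd, hQsum, rfl⟩
    have hmono : ∀ m, (W m * Q m).trace ≤ (Q m).trace := by
      intro m
      have hHerm : (1 - W m)ᴴ = 1 - W m := by
        rw [Matrix.conjTranspose_sub, Matrix.conjTranspose_one, (hWpsd m).1]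
      have hsq : (1 - W m) * (1 - W m) = 1 - W m := by
        simp only [Matrix.mul_sub, Matrix.sub_mul, Matrix.one_mul, Matrix.mul_one, hWsq m]
        abel
      have hP : (1 - W m).PosSemidef := by
        have h := Matrix.posSemidef_conjTranspose_mul_self (1 - W m)
        rwa [hHerm, hsq] at h
      have h0 : 0 ≤ ((1 - W m) * Q m).trace :=
        BellAux.trace_mul_psd_nonneg hP (hQpsd m)
      have hdiff : ((1 - W m) * Q m).trace = (Q m).trace - (W m * Q m).trace := by
        rw [Matrix.sub_mul, Matrix.one_mul, Matrix.trace_sub]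
      rw [hdiff] at h0
      exact sub_nonneg.mp h0
    have hsumtr : ∑ m, (W m * Q m).trace ≤ ((2 ^ N : ℕ) : ℂ) := by
      calc ∑ m, (W m * Q m).trace ≤ ∑ m, (Q m).trace :=
            Finset.sum_le_sum fun m _ => hmono m
        _ = (∑ m, Q m).trace := (Matrix.trace_sum _ _).symm
        _ = (1 : Matrix (Fin 4 × Fin (2 ^ (N - 2))) (Fin 4 × Fin (2 ^ (N - 2))) ℂ).trace := by rw [hQsum]
        _ = ((2 ^ N : ℕ) : ℂ) := by
            rw [Matrix.trace_one, h2N]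
            simp
    have hfactor : ∑ m, (1 / ((2 * K * (2 ^ (N - 2)) : ℕ) : ℂ)) * (W m * Q m).trace =
        (1 / ((2 * K * (2 ^ (N - 2)) : ℕ) : ℂ)) * ∑ m, (W m * Q m).trace := by
      rw [Finset.mul_sum]
    have hinvpos : 0 ≤ 1 / ((2 * K * (2 ^ (N - 2)) : ℕ) : ℂ) := by
      have : (1 / ((2 * K * (2 ^ (N - 2)) : ℕ) : ℂ)) = ((1 / ((2 * K * (2 ^ (N - 2)) : ℕ) : ℝ) : ℝ) : ℂ) := by
        push_cast; ring
      rw [this, Complex.zero_le_real]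
      positivity
    have hbound : ∑ m, (1 / ((2 * K * (2 ^ (N - 2)) : ℕ) : ℂ)) * (W m * Q m).trace ≤
        ((2 ^ N : ℕ) : ℂ) / ((2 * K * (2 ^ (N - 2)) : ℕ) : ℂ) := by
      rw [hfactor]
      calc (1 / ((2 * K * (2 ^ (N - 2)) : ℕ) : ℂ)) * ∑ m, (W m * Q m).trace ≤
          (1 / ((2 * K * (2 ^ (N - 2)) : ℕ) : ℂ)) * ((2 ^ N : ℕ) : ℂ) :=
            mul_le_mul_of_nonneg_left hsumtr hinvpos
        _ = ((2 ^ N : ℕ) : ℂ) / ((2 * K * (2 ^ (N - 2)) : ℕ) : ℂ) := by ring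
    exact sub_le_sub_left hbound 1
end
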